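/- arXiv:math/0409373 — 6 statements merged into one kernel-verified Lean document; each statement's English description precedes it below -/
import Mathlib

section
/- Let t, d ∈ ℂ[[z]] be formal power series such that t² − 4d has a simple zero at z = 0, and let A₀ ∈ M₂(ℂ[[z]]) satisfy tr A₀ = t and det A₀ = d. Then A₀ is a regular element: for every B ∈ M₂(ℂ((z))) with B·A₀ = A₀·B there exist f, g ∈ ℂ((z)) such that B = f·1 + g·A₀; moreover, if B ∈ M₂(ℂ[[z]]) then f and g lie in ℂ[[z]]. -/
open PowerSeries

noncomputable section

/-- `K = ℂ((z))`, the field of formal Laurent series. -/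
abbrev K : Type := LaurentSeries ℂ

/-- `ℂ[[z]]` viewed as a subring of `ℂ((z))`. -/
def Oz : Subring K := (HahnSeries.ofPowerSeries ℤ ℂ).range

/-- `h ∈ ℂ[[z]]` has a simple zero at `z = 0`: constant coefficient vanishes and the
coefficient of `z` is nonzero. -/
def SimpleZero (h : PowerSeries ℂ) : Prop :=
  PowerSeries.coeff 0 h = 0 ∧ PowerSeries.coeff 1 h ≠ 0

lemma coeff_one_mul' (p q : PowerSeries ℂ) :
    PowerSeries.coeff 1 (p*q) = coeff 0 p * coeff 1 q + coeff 1 p * coeff 0 q := by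
  rw [PowerSeries.coeff_mul, Finset.Nat.sum_antidiagonal_eq_sum_range_succ_mk]
  simp [Finset.sum_range_succ]

/-- If `t² - 4d` has a simple zero at `z = 0` and `A₀ ∈ M₂(ℂ[[z]])` has
trace `t` and determinant `d`, then `A₀` is regular: every `B ∈ M₂(ℂ((z)))` commuting with
`A₀` is of the form `f·1 + g·A₀` with `f, g ∈ ℂ((z))`; moreover if `B ∈ M₂(ℂ[[z]])` then
`f, g ∈ ℂ[[z]]`. -/
theorem stmt0 (t d : PowerSeries ℂ) (hsz : SimpleZero (t ^ 2 - 4 * d))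
    (A₀ : Matrix (Fin 2) (Fin 2) (PowerSeries ℂ))
    (htr : A₀.trace = t) (hdet : A₀.det = d)
    (B : Matrix (Fin 2) (Fin 2) K)
    (hcomm : B * A₀.map (HahnSeries.ofPowerSeries ℤ ℂ) =
      A₀.map (HahnSeries.ofPowerSeries ℤ ℂ) * B) :
    ∃ f g : K,
      B = f • (1 : Matrix (Fin 2) (Fin 2) K) +
              g • A₀.map (HahnSeries.ofPowerSeries ℤ ℂ) ∧
      ((∀ i j, B i j ∈ Oz) → f ∈ Oz ∧ g ∈ Oz) := by
  set φ := HahnSeries.ofPowerSeries ℤ ℂ with hφdef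
  have h1 : B 0 1 * φ (A₀ 1 0) = φ (A₀ 0 1) * B 1 0 := by
    have h := congrFun (congrFun hcomm 0) 0
    simp only [Matrix.mul_apply, Fin.sum_univ_two, Matrix.map_apply] at h
    linear_combination h
  have h2 : φ (A₀ 0 1) * (B 0 0 - B 1 1) = (φ (A₀ 0 0) - φ (A₀ 1 1)) * B 0 1 := by
    have h := congrFun (congrFun hcomm 0) 1
    simp only [Matrix.mul_apply, Fin.sum_univ_two, Matrix.map_apply] at h
    linear_combination h
  have h3 : B 1 0 * (φ (A₀ 0 0) - φ (A₀ 1 1)) = φ (A₀ 1 0) * (B 0 0 - B 1 1) := by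
    have h := congrFun (congrFun hcomm 1) 0
    simp only [Matrix.mul_apply, Fin.sum_univ_two, Matrix.map_apply] at h
    linear_combination h
  have hdisc : PowerSeries.coeff 1
      ((A₀ 0 0 - A₀ 1 1)^2 + 4*(A₀ 0 1 * A₀ 1 0)) ≠ 0 := by
    have : t ^ 2 - 4 * d = (A₀ 0 0 - A₀ 1 1)^2 + 4*(A₀ 0 1 * A₀ 1 0) := by
      rw [← htr, ← hdet, Matrix.trace_fin_two, Matrix.det_fin_two]
      ring
    rw [← this]
    exact hsz.2
  have hcases : constantCoeff (A₀ 0 0 - A₀ 1 1) ≠ 0 ∨ constantCoeff (A₀ 0 1) ≠ 0 ∨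
      constantCoeff (A₀ 1 0) ≠ 0 := by
    by_contra hcon
    push_neg at hcon
    obtain ⟨k1, k2, k3⟩ := hcon
    apply hdisc
    have h4b : coeff 1 (4 : PowerSeries ℂ) = 0 := by
      rw [← map_ofNat C 4, PowerSeries.coeff_C]; simp
    rw [map_add, pow_two, coeff_one_mul', coeff_one_mul', coeff_one_mul', h4b]
    simp [coeff_zero_eq_constantCoeff_apply, k1, k2, k3]
  obtain ⟨g, hgb, hgc, hgd, hgOz⟩ : ∃ g : K, B 0 1 = g * φ (A₀ 0 1) ∧
      B 1 0 = g * φ (A₀ 1 0) ∧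
      B 0 0 - B 1 1 = g * (φ (A₀ 0 0) - φ (A₀ 1 1)) ∧
      ((∀ i j, B i j ∈ Oz) → g ∈ Oz) := by
    have key : ∀ u : PowerSeries ℂ, constantCoeff u ≠ 0 →
        ∃ v : PowerSeries ℂ, φ u * φ v = 1 := fun u hu =>
      ⟨u⁻¹, by rw [← map_mul, PowerSeries.mul_inv_cancel _ hu, map_one]⟩
    rcases hcases with hu | hu | hu
    · obtain ⟨v, hv⟩ := key _ hu
      rw [map_sub] at hv
      refine ⟨(B 0 0 - B 1 1) * φ v, ?_, ?_, ?_, fun hB =>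
        mul_mem (sub_mem (hB 0 0) (hB 1 1)) ⟨v, rfl⟩⟩
      · linear_combination (-(φ v)) * h2 - B 0 1 * hv
      · linear_combination φ v * h3 - B 1 0 * hv
      · linear_combination (-(B 0 0 - B 1 1)) * hv
    · obtain ⟨v, hv⟩ := key _ hu
      refine ⟨B 0 1 * φ v, ?_, ?_, ?_, fun hB => mul_mem (hB 0 1) ⟨v, rfl⟩⟩
      · linear_combination (-(B 0 1)) * hv
      · linear_combination (-(φ v)) * h1 - B 1 0 * hv
      · linear_combination φ v * h2 - (B 0 0 - B 1 1) * hv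
    · obtain ⟨v, hv⟩ := key _ hu
      refine ⟨B 1 0 * φ v, ?_, ?_, ?_, fun hB => mul_mem (hB 1 0) ⟨v, rfl⟩⟩
      · linear_combination φ v * h1 - B 0 1 * hv
      · linear_combination (-(B 1 0)) * hv
      · linear_combination (-(φ v)) * h3 - (B 0 0 - B 1 1) * hv
  refine ⟨B 0 0 - g * φ (A₀ 0 0), g, ?_, fun hB =>
    ⟨sub_mem (hB 0 0) (mul_mem (hgOz hB) ⟨A₀ 0 0, rfl⟩), hgOz hB⟩⟩
  refine Matrix.ext fun i j => ?_
  fin_cases i <;> fin_cases j <;>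
    simp only [Matrix.add_apply, Matrix.smul_apply, Matrix.one_apply_eq, Matrix.one_apply_ne,
      Matrix.map_apply, smul_eq_mul, Fin.isValue, Fin.zero_eta, Fin.mk_one, ne_eq,
      one_ne_zero, not_false_eq_true, zero_ne_one, mul_zero, mul_one, zero_add]
  · ring
  · linear_combination hgb
  · linear_combination hgc
  · linear_combination -hgd


end
end

section
/- Let t, d ∈ ℂ[[z]] be such that t² − 4d has a simple zero at z = 0, and let A₀ ∈ M₂(ℂ[[z]]) satisfy tr A₀ = t and det A₀ = d. Suppose B ∈ M₂(ℂ((z))) satisfies B·A₀ = A₀·B and dB/dz = C + (A₀·D − D·A₀) for some C ∈ M₂(ℂ[[z]]) and some D ∈ M₂(ℂ((z))). Then B ∈ M₂(ℂ[[z]]). -/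
open PowerSeries

noncomputable section

/-- The formal derivative `d/dz` on Laurent series. -/
def lD (f : K) : K where
  coeff n := ((n : ℂ) + 1) * f.coeff (n + 1)
  isPWO_support' := by
    apply Set.IsPWO.mono ((f.isPWO_support).image_of_monotone
      (f := fun m : ℤ => m - 1) (fun a b hab => by simpa using hab))
    intro n hn
    refine ⟨n + 1, ?_, by ring⟩
    intro h0
    apply hn
    simp [h0]

local notation "φ" => HahnSeries.ofPowerSeries ℤ ℂ

lemma lD_coeff (f : K) (n : ℤ) : (lD f).coeff n = ((n : ℂ) + 1) * f.coeff (n + 1) := rfl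

lemma ofPS_coeff_neg (g : PowerSeries ℂ) {n : ℤ} (hn : n < 0) : (φ g).coeff n = 0 := by
  rw [HahnSeries.ofPowerSeries_apply]
  apply HahnSeries.embDomain_notin_image_support
  rintro ⟨m, -, hm⟩
  have hm' : (m : ℤ) = n := hm
  omega

lemma ofPS_coeff (g : PowerSeries ℂ) (n : ℕ) : (φ g).coeff (n : ℤ) = PowerSeries.coeff n g :=
  HahnSeries.ofPowerSeries_apply_coeff g n

lemma lD_add (f g : K) : lD (f + g) = lD f + lD g := by
  ext n
  simp only [lD_coeff, HahnSeries.coeff_add]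
  ring

lemma lD_ofPS (g : PowerSeries ℂ) : lD (φ g) = φ g.derivativeFun := by
  ext n
  rcases le_or_gt 0 n with hn | hn
  · obtain ⟨m, rfl⟩ := Int.eq_ofNat_of_zero_le hn
    rw [lD_coeff, ofPS_coeff, show ((m : ℤ) + 1) = ((m + 1 : ℕ) : ℤ) by push_cast; ring,
      ofPS_coeff, show g.derivativeFun = PowerSeries.derivative ℂ g from rfl, coeff_derivative]
    push_cast
    ring
  · rw [lD_coeff, ofPS_coeff_neg g.derivativeFun hn]
    rcases lt_or_eq_of_le (by omega : n + 1 ≤ 0) with h | h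
    · rw [ofPS_coeff_neg g h, mul_zero]
    · have : (n : ℂ) + 1 = 0 := by
        have : n = -1 := by omega
        simp [this]
      rw [this, zero_mul]

lemma single_mul_coeff (m : ℤ) (c : ℂ) (x : K) (n : ℤ) :
    (HahnSeries.single m c * x).coeff n = c * x.coeff (n - m) := by
  have : n = (n - m) + m := by ring
  rw [this, HahnSeries.coeff_single_mul_add]
  ring_nf

def S (m : ℤ) : K := HahnSeries.single m 1

lemma S_mul_S (m l : ℤ) : S m * S l = S (m + l) := by
  unfold S
  rw [HahnSeries.single_mul_single, one_mul]

lemma lD_single_ofPS (m : ℤ) (g : PowerSeries ℂ) :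
    lD (S m * φ g) = S (m - 1) * φ (PowerSeries.C ((m : ℂ)) * g + X * g.derivativeFun) := by
  ext n
  unfold S
  rw [lD_coeff, single_mul_coeff, single_mul_coeff]
  have e1 : n + 1 - m = n - (m - 1) := by ring
  rw [e1]
  set k : ℤ := n - (m - 1) with hk
  rcases le_or_gt 0 k with hpos | hneg
  · obtain ⟨j, hj⟩ := Int.eq_ofNat_of_zero_le hpos
    rw [hj, ofPS_coeff, ofPS_coeff]
    rw [map_add, PowerSeries.coeff_C_mul]
    have hn : (n : ℂ) + 1 = (m : ℂ) + (j : ℂ) := by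
      have : n + 1 = m + (j : ℤ) := by omega
      calc (n : ℂ) + 1 = ((n + 1 : ℤ) : ℂ) := by push_cast; ring
        _ = (m : ℂ) + (j : ℂ) := by rw [this]; push_cast; ring
    rw [hn]
    cases j with
    | zero => simp
    | succ i =>
      rw [PowerSeries.coeff_succ_X_mul, show g.derivativeFun = PowerSeries.derivative ℂ g from rfl,
        coeff_derivative]
      push_cast
      ring
  · rw [ofPS_coeff_neg _ hneg, ofPS_coeff_neg _ hneg]
    ring

lemma exists_rep (f : K) : ∃ (m : ℤ) (g : PowerSeries ℂ), f = S m * φ g := by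
  by_cases hf : f = 0
  · exact ⟨0, 0, by simp [hf, S]⟩
  · exact ⟨f.order, f.powerSeriesPart, (f.single_order_mul_powerSeriesPart).symm⟩

lemma lD_mul (f g : K) : lD (f * g) = f * lD g + lD f * g := by
  obtain ⟨m, a, rfl⟩ := exists_rep f
  obtain ⟨l, b, rfl⟩ := exists_rep g
  have hprod : (S m * φ a) * (S l * φ b) = S (m + l) * φ (a * b) := by
    rw [map_mul, ← S_mul_S]
    ring
  rw [hprod, lD_single_ofPS, lD_single_ofPS, lD_single_ofPS]
  have e2 : S (m + l - 1) = S (m - 1) * S l := by rw [S_mul_S]; ring_nf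
  have e3 : S (m + l - 1) = S (l - 1) * S m := by rw [S_mul_S]; ring_nf
  calc S (m + l - 1) * φ (PowerSeries.C ((m + l : ℤ) : ℂ) * (a * b) + X * (a * b).derivativeFun)
      = S (m + l - 1) * φ (a * (PowerSeries.C ((l : ℤ) : ℂ) * b + X * b.derivativeFun)
          + b * (PowerSeries.C ((m : ℤ) : ℂ) * a + X * a.derivativeFun)) := by
        congr 1
        congr 1
        rw [derivativeFun_mul, smul_eq_mul, smul_eq_mul]
        rw [show ((m + l : ℤ) : ℂ) = ((m : ℤ) : ℂ) + ((l : ℤ) : ℂ) by push_cast; ring, map_add]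
        ring
    _ = S m * φ a * (S (l - 1) * φ (PowerSeries.C ((l : ℤ) : ℂ) * b + X * b.derivativeFun))
          + S (m - 1) * φ (PowerSeries.C ((m : ℤ) : ℂ) * a + X * a.derivativeFun) * (S l * φ b) := by
        rw [map_add, map_mul, map_mul, mul_add]
        nth_rewrite 1 [e3]
        nth_rewrite 1 [e2]
        ring

lemma Oz_coeff_neg {x : K} (hx : x ∈ Oz) : ∀ n < 0, x.coeff n = 0 := by
  obtain ⟨g, rfl⟩ := hx
  intro n hn
  exact ofPS_coeff_neg g hn

lemma mem_Oz_of_coeff {x : K} (hx : ∀ n < 0, x.coeff n = 0) : x ∈ Oz := by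
  refine ⟨PowerSeries.mk (fun n => x.coeff n), ?_⟩
  ext n
  rcases le_or_gt 0 n with hn | hn
  · obtain ⟨j, rfl⟩ := Int.eq_ofNat_of_zero_le hn
    rw [ofPS_coeff, PowerSeries.coeff_mk]
  · rw [ofPS_coeff_neg _ hn, hx n hn]

lemma lD_mem_Oz {x : K} (hx : x ∈ Oz) : lD x ∈ Oz := by
  obtain ⟨g, rfl⟩ := hx
  exact ⟨g.derivativeFun, (lD_ofPS g).symm⟩

lemma mem_Oz_of_lD {x : K} (hx : lD x ∈ Oz) : x ∈ Oz := by
  apply mem_Oz_of_coeff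
  intro n hn
  have h := Oz_coeff_neg hx (n - 1) (by omega)
  rw [lD_coeff] at h
  have h2 : ((n : ℂ) - 1 + 1) ≠ 0 := by
    rw [show (n : ℂ) - 1 + 1 = (n : ℂ) by ring]
    exact_mod_cast (by omega : n ≠ 0)
  rw [show n - 1 + 1 = n by ring] at h
  rcases mul_eq_zero.1 h with h | h
  · exact absurd (by push_cast at h ⊢; linear_combination h) h2
  · exact h

lemma coeff_mul_zero {x y : K} {p q n : ℤ} (hx : ∀ i < p, x.coeff i = 0)
    (hy : ∀ j < q, y.coeff j = 0) (hn : n < p + q) : (x * y).coeff n = 0 := by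
  rw [HahnSeries.coeff_mul]
  apply Finset.sum_eq_zero
  rintro ⟨i, j⟩ hij
  rw [Finset.mem_addAntidiagonal] at hij
  obtain ⟨hi, hj, hsum⟩ := hij
  rcases lt_or_ge i p with h | h
  · rw [hx i h, zero_mul]
  · rw [hy j (by omega), mul_zero]

lemma coeff_mul_eq {x y : K} {p q : ℤ} (hx : ∀ i < p, x.coeff i = 0)
    (hy : ∀ j < q, y.coeff j = 0) : (x * y).coeff (p + q) = x.coeff p * y.coeff q := by
  rw [HahnSeries.coeff_mul]
  apply Finset.sum_eq_single (p, q)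
  · rintro ⟨i, j⟩ hij hne
    rw [Finset.mem_addAntidiagonal] at hij
    obtain ⟨hi, hj, hsum⟩ := hij
    rcases lt_trichotomy i p with h | h | h
    · rw [hx i h, zero_mul]
    · exact absurd (Prod.ext h (by omega)) hne
    · rw [hy j (by omega), mul_zero]
  · intro h
    rw [Finset.mem_addAntidiagonal] at h
    push_neg at h
    by_cases hp : x.coeff p = 0
    · rw [hp, zero_mul]
    · by_cases hq : y.coeff q = 0
      · rw [hq, mul_zero]
      · exact absurd rfl (h hp hq)

lemma lD_C (c : ℂ) : lD (HahnSeries.C c) = 0 := by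
  ext n
  rw [lD_coeff, HahnSeries.C_apply, HahnSeries.coeff_single, HahnSeries.coeff_zero]
  split_ifs with h
  · rw [show (n : ℂ) + 1 = 0 by rw [show n = -1 by omega]; push_cast; ring, zero_mul]
  · rw [mul_zero]

lemma lD_one : lD (1 : K) = 0 := by
  rw [show (1 : K) = HahnSeries.C 1 from (map_one (HahnSeries.C)).symm]
  exact lD_C 1

lemma lD_neg (f : K) : lD (-f) = -lD f := by
  ext n
  simp only [lD_coeff, HahnSeries.coeff_neg]
  ring

lemma lD_sub (f g : K) : lD (f - g) = lD f - lD g := by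
  rw [sub_eq_add_neg, lD_add, lD_neg, sub_eq_add_neg]

lemma lD_four_mul (x : K) : lD (4 * x) = 4 * lD x := by
  have h4 : (4 : K) = HahnSeries.C (4 : ℂ) := by
    rw [map_ofNat]
  rw [lD_mul, h4, lD_C, zero_mul, add_zero]

lemma centralizer {A B : Matrix (Fin 2) (Fin 2) K}
    (hA : ¬ (A 0 1 = 0 ∧ A 1 0 = 0 ∧ A 0 0 = A 1 1))
    (hcomm : B * A = A * B) :
    ∃ f g : K, B = f • 1 + g • A := by
  have h := fun i j => congrFun (congrFun hcomm i) j
  simp only [Matrix.mul_apply, Fin.sum_univ_two] at h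
  have h00 := h 0 0
  have h01 := h 0 1
  have h10 := h 1 0
  have key : ∀ f g : K, B 0 0 = f + g * A 0 0 → B 0 1 = g * A 0 1 → B 1 0 = g * A 1 0 →
      B 1 1 = f + g * A 1 1 → B = f • 1 + g • A := by
    intro f g e1 e2 e3 e4
    apply Matrix.ext
    intro i j
    fin_cases i <;> fin_cases j <;>
      simp only [Fin.zero_eta, Fin.mk_one, Matrix.add_apply, Matrix.smul_apply, smul_eq_mul,
        Matrix.one_apply_eq, Matrix.one_apply_ne (by decide : (0 : Fin 2) ≠ 1),
        Matrix.one_apply_ne (by decide : (1 : Fin 2) ≠ 0), mul_one, mul_zero, zero_add, add_zero]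
    · rw [e1]
    · rw [e2]
    · rw [e3]
    · rw [e4]
  by_cases hb : A 0 1 ≠ 0
  · refine ⟨B 0 0 - B 0 1 / A 0 1 * A 0 0, B 0 1 / A 0 1, key _ _ ?_ ?_ ?_ ?_⟩
    · field_simp
      ring
    · field_simp
    · field_simp
      linear_combination -h00
    · field_simp
      linear_combination -h01
  · push_neg at hb
    by_cases hc : A 1 0 ≠ 0
    · refine ⟨B 0 0 - B 1 0 / A 1 0 * A 0 0, B 1 0 / A 1 0, key _ _ ?_ ?_ ?_ ?_⟩
      · field_simp
        ring
      · field_simp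
        linear_combination h00
      · field_simp
      · field_simp
        linear_combination h10
    · push_neg at hc
      have had : A 0 0 ≠ A 1 1 := fun hd => hA ⟨hb, hc, hd⟩
      have hsub : A 0 0 - A 1 1 ≠ 0 := sub_ne_zero_of_ne had
      have hq : B 0 1 = 0 := by
        have h2 : B 0 1 * (A 1 1 - A 0 0) = 0 := by
          linear_combination h01 + (B 1 1 - B 0 0) * hb
        rcases mul_eq_zero.1 h2 with h3 | h3
        · exact h3
        · exact absurd (by linear_combination -h3) hsub
      have hr : B 1 0 = 0 := by
        have h2 : B 1 0 * (A 0 0 - A 1 1) = 0 := by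
          linear_combination h10 + (B 0 0 - B 1 1) * hc
        rcases mul_eq_zero.1 h2 with h3 | h3
        · exact h3
        · exact absurd h3 hsub
      refine ⟨B 0 0 - (B 0 0 - B 1 1) / (A 0 0 - A 1 1) * A 0 0,
        (B 0 0 - B 1 1) / (A 0 0 - A 1 1), key _ _ ?_ ?_ ?_ ?_⟩
      · field_simp
        ring
      · rw [hq, hb, mul_zero]
      · rw [hr, hc, mul_zero]
      · field_simp
        ring

lemma div_lemma {x y g : K} (hx : x ∈ Oz) (hy : y ∈ Oz) (hx0 : x.coeff 0 = 0)
    (hy0 : y.coeff 0 = 0) (hy1 : y.coeff 1 ≠ 0) (hgy : g * y = x) : g ∈ Oz := by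
  obtain ⟨G, hG⟩ := hx
  obtain ⟨Y, hY⟩ := hy
  have hYc : PowerSeries.constantCoeff Y = 0 := by
    have := ofPS_coeff Y 0
    rw [hY] at this
    rw [← PowerSeries.coeff_zero_eq_constantCoeff_apply, ← this]
    exact hy0
  have hGc : PowerSeries.constantCoeff G = 0 := by
    have := ofPS_coeff G 0
    rw [hG] at this
    rw [← PowerSeries.coeff_zero_eq_constantCoeff_apply, ← this]
    exact hx0
  obtain ⟨E, hE⟩ := PowerSeries.X_dvd_iff.2 hYc
  obtain ⟨G₁, hG₁⟩ := PowerSeries.X_dvd_iff.2 hGc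
  have hEc : PowerSeries.constantCoeff E ≠ 0 := by
    intro h0
    apply hy1
    rw [← hY, show (1:ℤ) = ((1:ℕ):ℤ) from rfl, ofPS_coeff, hE,
      show (1:ℕ) = 0 + 1 from rfl, PowerSeries.coeff_succ_X_mul,
      PowerSeries.coeff_zero_eq_constantCoeff_apply]
    exact h0
  have hYne : (φ Y : K) ≠ 0 := by
    intro h0
    apply hy1
    rw [← hY, h0, HahnSeries.coeff_zero]
  refine ⟨G₁ * E⁻¹, ?_⟩
  have hEE : E * E⁻¹ = 1 := PowerSeries.mul_inv_cancel E hEc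
  apply mul_right_cancel₀ hYne
  rw [← map_mul, show G₁ * E⁻¹ * Y = G₁ * E⁻¹ * (X * E) by rw [hE],
    show G₁ * E⁻¹ * (X * E) = X * G₁ * (E * E⁻¹) by ring, hEE, mul_one, ← hG₁, hG, ← hgy, hY]

lemma key_ode {Dl Dl' w u tt tt' : K} (v : K)
    (hΔmem : Dl ∈ Oz) (hΔ0 : Dl.coeff 0 = 0) (hΔ1 : Dl.coeff 1 ≠ 0)
    (hΔ' : Dl' = lD Dl)
    (hw : w ∈ Oz) (hu : u ∈ Oz) (htt : tt ∈ Oz) (htt' : tt' ∈ Oz)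
    (hM : Dl * ((4:ℂ) • lD v) = Dl * ((4:ℂ) • w + (2:ℂ) • (u * tt')) +
      (((2:ℂ) • v - u * tt) * Dl')) :
    (∀ n < 0, v.coeff n = 0) ∧ 2 * v.coeff 0 = u.coeff 0 * tt.coeff 0 := by
  have hΔlow : ∀ i < (1:ℤ), Dl.coeff i = 0 := by
    intro i hi
    rcases lt_or_eq_of_le (by omega : i ≤ 0) with h | h
    · exact Oz_coeff_neg hΔmem i h
    · rw [h]; exact hΔ0
  have hΔ'low : ∀ i < (0:ℤ), Dl'.coeff i = 0 := Oz_coeff_neg (hΔ' ▸ lD_mem_Oz hΔmem)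
  have hΔ'0 : Dl'.coeff 0 = Dl.coeff 1 := by
    rw [hΔ', lD_coeff]
    norm_num
  have hZlow : ∀ j < (0:ℤ), ((4:ℂ) • w + (2:ℂ) • (u * tt')).coeff j = 0 := by
    intro j hj
    rw [HahnSeries.coeff_add, HahnSeries.coeff_smul, HahnSeries.coeff_smul,
      Oz_coeff_neg hw j hj, coeff_mul_zero (Oz_coeff_neg hu) (Oz_coeff_neg htt') (by omega)]
    simp
  have hstep1 : ∀ n < (0:ℤ), v.coeff n = 0 := by
    by_contra hcon
    push_neg at hcon
    obtain ⟨n0, hn0, hv0⟩ := hcon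
    set Sset : Set ℤ := {n | v.coeff n ≠ 0 ∧ n < 0} with hSset
    have hsub : Sset ⊆ v.support := fun n hn => hn.1
    have hWF : Sset.IsWF := v.isWF_support.subset hsub
    have hne : Sset.Nonempty := ⟨n0, hv0, hn0⟩
    set m := hWF.min hne with hm
    obtain ⟨hm1, hm2⟩ : v.coeff m ≠ 0 ∧ m < 0 := hWF.min_mem hne
    have hmin : ∀ i < m, v.coeff i = 0 := by
      intro i hi
      by_contra hne0
      exact hWF.not_lt_min hne ⟨hne0, by omega⟩ hi
    -- coefficient of hM at index m
    have hYlow : ∀ j < m - 1, ((4:ℂ) • lD v).coeff j = 0 := by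
      intro j hj
      rw [HahnSeries.coeff_smul, lD_coeff, hmin (j+1) (by omega)]
      simp
    have hWlow : ∀ i < m, ((2:ℂ) • v - u * tt).coeff i = 0 := by
      intro i hi
      rw [HahnSeries.coeff_sub, HahnSeries.coeff_smul, hmin i hi,
        coeff_mul_zero (Oz_coeff_neg hu) (Oz_coeff_neg htt) (by omega)]
      simp
    have hLHS : (Dl * ((4:ℂ) • lD v)).coeff m = Dl.coeff 1 * (4 * ((m : ℂ)) * v.coeff m) := by
      have := coeff_mul_eq hΔlow hYlow
      rw [show (1 : ℤ) + (m - 1) = m by ring] at this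
      rw [this, HahnSeries.coeff_smul, lD_coeff, show m - 1 + 1 = m by ring]
      simp only [smul_eq_mul]
      push_cast
      ring
    have hRHS1 : (Dl * ((4:ℂ) • w + (2:ℂ) • (u * tt'))).coeff m = 0 :=
      coeff_mul_zero hΔlow hZlow (by omega)
    have hRHS2 : ((((2:ℂ) • v - u * tt)) * Dl').coeff m = 2 * v.coeff m * Dl.coeff 1 := by
      have := coeff_mul_eq hWlow hΔ'low
      rw [add_zero] at this
      rw [this, HahnSeries.coeff_sub, HahnSeries.coeff_smul,
        coeff_mul_zero (Oz_coeff_neg hu) (Oz_coeff_neg htt) (by omega), hΔ'0]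
      simp only [smul_eq_mul]
      push_cast
      ring
    have heq := congrArg (fun x : K => x.coeff m) hM
    simp only [HahnSeries.coeff_add] at heq
    rw [hLHS, hRHS1, hRHS2, zero_add] at heq
    have hfac : (4 * (m : ℂ) - 2) * (v.coeff m * Dl.coeff 1) = 0 := by
      linear_combination heq
    rcases mul_eq_zero.1 hfac with h | h
    · have : ((4 * m - 2 : ℤ) : ℂ) = 0 := by push_cast; linear_combination h
      have : (4 * m - 2 : ℤ) = 0 := by exact_mod_cast this
      omega
    · rcases mul_eq_zero.1 h with h' | h'
      · exact hm1 h'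
      · exact hΔ1 h'
  refine ⟨hstep1, ?_⟩
  -- coefficient of hM at index 0
  have hYlow : ∀ j < (0:ℤ), ((4:ℂ) • lD v).coeff j = 0 := by
    intro j hj
    rw [HahnSeries.coeff_smul, lD_coeff]
    rcases lt_or_eq_of_le (by omega : j ≤ -1) with h | h
    · rw [hstep1 (j+1) (by omega)]
      simp
    · rw [show (j : ℂ) + 1 = 0 by rw [h]; push_cast; ring]
      simp
  have hWlow : ∀ i < (0:ℤ), ((2:ℂ) • v - u * tt).coeff i = 0 := by
    intro i hi
    rw [HahnSeries.coeff_sub, HahnSeries.coeff_smul, hstep1 i hi,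
      coeff_mul_zero (Oz_coeff_neg hu) (Oz_coeff_neg htt) (by omega)]
    simp
  have hLHS : (Dl * ((4:ℂ) • lD v)).coeff 0 = 0 := coeff_mul_zero hΔlow hYlow (by omega)
  have hRHS1 : (Dl * ((4:ℂ) • w + (2:ℂ) • (u * tt'))).coeff 0 = 0 :=
    coeff_mul_zero hΔlow hZlow (by omega)
  have hRHS2 : ((((2:ℂ) • v - u * tt)) * Dl').coeff 0 =
      (2 * v.coeff 0 - u.coeff 0 * tt.coeff 0) * Dl.coeff 1 := by
    have := coeff_mul_eq hWlow hΔ'low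
    rw [add_zero] at this
    rw [this, HahnSeries.coeff_sub, HahnSeries.coeff_smul, hΔ'0]
    have hut : (u * tt).coeff 0 = u.coeff 0 * tt.coeff 0 := by
      have := coeff_mul_eq (Oz_coeff_neg hu) (Oz_coeff_neg htt)
      rw [add_zero] at this
      exact this
    rw [hut]
    simp only [smul_eq_mul]
  have heq := congrArg (fun x : K => x.coeff 0) hM
  simp only [HahnSeries.coeff_add] at heq
  rw [hLHS, hRHS1, hRHS2, zero_add] at heq
  have := mul_eq_zero.1 heq.symm
  rcases this with h | h
  · linear_combination h
  · exact absurd h hΔ1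

/-- Under the non-degeneracy condition, if `B ∈ M₂(ℂ((z)))` commutes with
`A₀` and `dB/dz ∈ M₂(ℂ[[z]]) + [A₀, M₂(ℂ((z)))]`, then `B ∈ M₂(ℂ[[z]])`. -/
theorem stmt1 (t d : PowerSeries ℂ) (hsz : SimpleZero (t ^ 2 - 4 * d))
    (A₀ : Matrix (Fin 2) (Fin 2) (PowerSeries ℂ))
    (htr : A₀.trace = t) (hdet : A₀.det = d)
    (B : Matrix (Fin 2) (Fin 2) K)
    (hcomm : B * A₀.map (HahnSeries.ofPowerSeries ℤ ℂ) =
      A₀.map (HahnSeries.ofPowerSeries ℤ ℂ) * B)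
    (C D : Matrix (Fin 2) (Fin 2) K)
    (hC : ∀ i j, C i j ∈ Oz)
    (hder : B.map lD = C + (A₀.map (HahnSeries.ofPowerSeries ℤ ℂ) * D -
      D * A₀.map (HahnSeries.ofPowerSeries ℤ ℂ))) :
    ∀ i j, B i j ∈ Oz := by
  -- basic entries
  have hamem : ∀ i j, (A₀.map (HahnSeries.ofPowerSeries ℤ ℂ)) i j ∈ Oz := by
    intro i j
    exact ⟨A₀ i j, (Matrix.map_apply).symm⟩
  set a : K := φ (A₀ 0 0) with ha
  set b : K := φ (A₀ 0 1) with hb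
  set c : K := φ (A₀ 1 0) with hc
  set dd : K := φ (A₀ 1 1) with hdd
  have hΔcoe : φ (t ^ 2 - 4 * d) = (a - dd) ^ 2 + 4 * (b * c) := by
    have ht : t = A₀ 0 0 + A₀ 1 1 := by rw [← htr, Matrix.trace_fin_two]
    have hd : d = A₀ 0 0 * A₀ 1 1 - A₀ 0 1 * A₀ 1 0 := by rw [← hdet, Matrix.det_fin_two]
    rw [ht, hd, ha, hb, hc, hdd]
    simp only [map_sub, map_mul, map_add, map_pow, map_ofNat]
    ring
  have hΔ0 : ((a - dd) ^ 2 + 4 * (b * c)).coeff 0 = 0 := by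
    rw [← hΔcoe, show (0 : ℤ) = ((0 : ℕ) : ℤ) from rfl, ofPS_coeff]
    exact hsz.1
  have hΔ1 : ((a - dd) ^ 2 + 4 * (b * c)).coeff 1 ≠ 0 := by
    rw [← hΔcoe, show (1 : ℤ) = ((1 : ℕ) : ℤ) from rfl, ofPS_coeff]
    exact hsz.2
  -- non-scalar
  have hAmap : ∀ i j, (A₀.map (HahnSeries.ofPowerSeries ℤ ℂ)) i j = φ (A₀ i j) := by
    intro i j; exact Matrix.map_apply
  have hA' : ¬ ((A₀.map (HahnSeries.ofPowerSeries ℤ ℂ)) 0 1 = 0 ∧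
      (A₀.map (HahnSeries.ofPowerSeries ℤ ℂ)) 1 0 = 0 ∧
      (A₀.map (HahnSeries.ofPowerSeries ℤ ℂ)) 0 0 = (A₀.map (HahnSeries.ofPowerSeries ℤ ℂ)) 1 1) := by
    rintro ⟨h1, h2, h3⟩
    rw [hAmap, ← hb] at h1
    rw [hAmap, ← hc] at h2
    rw [hAmap, hAmap, ← ha, ← hdd] at h3
    apply hΔ1
    rw [h1, h2, h3]
    simp
  obtain ⟨f, g, hB⟩ := centralizer hA' hcomm
  -- entry formulas
  have hentry : ∀ i j, B i j = f * (1 : Matrix (Fin 2) (Fin 2) K) i j +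
      g * φ (A₀ i j) := by
    intro i j
    rw [hB]
    simp only [Matrix.add_apply, Matrix.smul_apply, smul_eq_mul, hAmap]
  have hp : B 0 0 = f + g * a := by rw [hentry 0 0, Matrix.one_apply_eq, mul_one, ha]
  have hq : B 0 1 = g * b := by
    rw [hentry 0 1, Matrix.one_apply_ne (by decide : (0 : Fin 2) ≠ 1), mul_zero, zero_add, hb]
  have hr : B 1 0 = g * c := by
    rw [hentry 1 0, Matrix.one_apply_ne (by decide : (1 : Fin 2) ≠ 0), mul_zero, zero_add, hc]
  have hs : B 1 1 = f + g * dd := by rw [hentry 1 1, Matrix.one_apply_eq, mul_one, hdd]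
  -- derivative equations, entrywise
  have hDmat := fun i j => congrFun (congrFun hder i) j
  simp only [Matrix.map_apply, Matrix.add_apply, Matrix.sub_apply, Matrix.mul_apply,
    Fin.sum_univ_two] at hDmat
  have hD00 := hDmat 0 0
  have hD01 := hDmat 0 1
  have hD10 := hDmat 1 0
  have hD11 := hDmat 1 1
  simp only [← ha, ← hb, ← hc, ← hdd] at hD00 hD01 hD10 hD11
  have haOz : a ∈ Oz := ⟨A₀ 0 0, ha.symm⟩
  have hbOz : b ∈ Oz := ⟨A₀ 0 1, hb.symm⟩
  have hcOz : c ∈ Oz := ⟨A₀ 1 0, hc.symm⟩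
  have hddOz : dd ∈ Oz := ⟨A₀ 1 1, hdd.symm⟩
  -- trace: u = B 0 0 + B 1 1
  have hu1 : lD (B 0 0 + B 1 1) = C 0 0 + C 1 1 := by
    rw [lD_add, hD00, hD11]; ring
  have humem : (B 0 0 + B 1 1) ∈ Oz :=
    mem_Oz_of_lD (hu1 ▸ Subring.add_mem _ (hC 0 0) (hC 1 1))
  -- w
  have hWval : a * lD (B 0 0) + b * lD (B 1 0) + c * lD (B 0 1) + dd * lD (B 1 1)
      = a * C 0 0 + b * C 1 0 + c * C 0 1 + dd * C 1 1 := by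
    rw [hD00, hD01, hD10, hD11]; ring
  have hwmem : (a * lD (B 0 0) + b * lD (B 1 0) + c * lD (B 0 1) + dd * lD (B 1 1)) ∈ Oz := by
    rw [hWval]
    exact add_mem (add_mem (add_mem (mul_mem haOz (hC 0 0)) (mul_mem hbOz (hC 1 0)))
      (mul_mem hcOz (hC 0 1))) (mul_mem hddOz (hC 1 1))
  have httmem : (a + dd) ∈ Oz := add_mem haOz hddOz
  have htt'mem : (lD a + lD dd) ∈ Oz := add_mem (lD_mem_Oz haOz) (lD_mem_Oz hddOz)
  -- Leibniz expansion of lD v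
  have hlv : lD (a * B 0 0 + b * B 1 0 + c * B 0 1 + dd * B 1 1) =
      (lD a * B 0 0 + lD b * B 1 0 + lD c * B 0 1 + lD dd * B 1 1) +
      (a * lD (B 0 0) + b * lD (B 1 0) + c * lD (B 0 1) + dd * lD (B 1 1)) := by
    rw [lD_add, lD_add, lD_add, lD_mul, lD_mul, lD_mul, lD_mul]
    ring
  have hΔ'expr : lD ((a - dd) ^ 2 + 4 * (b * c)) =
      2 * (a - dd) * (lD a - lD dd) + 4 * (lD b * c + b * lD c) := by
    rw [show ((a - dd) ^ 2 + 4 * (b * c) : K) = (a - dd) * (a - dd) + 4 * (b * c) by ring]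
    rw [lD_add, lD_mul, lD_four_mul, lD_mul, lD_sub]
    ring
  -- master identity
  have hM : ((a - dd) ^ 2 + 4 * (b * c)) *
        ((4:ℂ) • lD (a * B 0 0 + b * B 1 0 + c * B 0 1 + dd * B 1 1)) =
      ((a - dd) ^ 2 + 4 * (b * c)) *
        ((4:ℂ) • (a * lD (B 0 0) + b * lD (B 1 0) + c * lD (B 0 1) + dd * lD (B 1 1)) +
          (2:ℂ) • ((B 0 0 + B 1 1) * (lD a + lD dd))) +
      (((2:ℂ) • (a * B 0 0 + b * B 1 0 + c * B 0 1 + dd * B 1 1) -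
        (B 0 0 + B 1 1) * (a + dd)) * lD ((a - dd) ^ 2 + 4 * (b * c))) := by
    rw [hlv, hΔ'expr, hp, hq, hr, hs]
    simp only [← HahnSeries.single_zero_mul_eq_smul, ← HahnSeries.C_apply, map_ofNat]
    ring
  obtain ⟨hvneg, hv0⟩ := key_ode (a * B 0 0 + b * B 1 0 + c * B 0 1 + dd * B 1 1)
    ⟨t ^ 2 - 4 * d, hΔcoe⟩ hΔ0 hΔ1 rfl hwmem humem httmem htt'mem hM
  -- g ∈ Oz
  have hgΔ : g * ((a - dd) ^ 2 + 4 * (b * c)) =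
      (2:ℂ) • (a * B 0 0 + b * B 1 0 + c * B 0 1 + dd * B 1 1) -
        (B 0 0 + B 1 1) * (a + dd) := by
    rw [hp, hq, hr, hs]
    simp only [← HahnSeries.single_zero_mul_eq_smul, ← HahnSeries.C_apply, map_ofNat]
    ring
  have hXmem : ((2:ℂ) • (a * B 0 0 + b * B 1 0 + c * B 0 1 + dd * B 1 1) -
      (B 0 0 + B 1 1) * (a + dd)) ∈ Oz := by
    apply mem_Oz_of_coeff
    intro n hn
    rw [HahnSeries.coeff_sub, HahnSeries.coeff_smul, hvneg n hn,
      coeff_mul_zero (Oz_coeff_neg humem) (Oz_coeff_neg httmem) (by omega)]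
    simp
  have hX0 : ((2:ℂ) • (a * B 0 0 + b * B 1 0 + c * B 0 1 + dd * B 1 1) -
      (B 0 0 + B 1 1) * (a + dd)).coeff 0 = 0 := by
    have hut0 : ((B 0 0 + B 1 1) * (a + dd)).coeff 0 =
        (B 0 0 + B 1 1).coeff 0 * (a + dd).coeff 0 := by
      have := coeff_mul_eq (Oz_coeff_neg humem) (Oz_coeff_neg httmem)
      rw [add_zero] at this
      exact this
    rw [HahnSeries.coeff_sub, HahnSeries.coeff_smul, hut0]
    simp only [smul_eq_mul]
    linear_combination hv0
  have hgmem : g ∈ Oz :=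
    div_lemma hXmem ⟨t ^ 2 - 4 * d, hΔcoe⟩ hX0 hΔ0 hΔ1 hgΔ
  -- f ∈ Oz
  have hfmem : f ∈ Oz := by
    apply mem_Oz_of_coeff
    intro n hn
    have h2f : (B 0 0 + B 1 1) - g * (a + dd) = (2:ℂ) • f := by
      rw [hp, hs]
      simp only [← HahnSeries.single_zero_mul_eq_smul, ← HahnSeries.C_apply, map_ofNat]
      ring
    have hco := congrArg (fun x : K => x.coeff n) h2f
    simp only [HahnSeries.coeff_sub, HahnSeries.coeff_smul, smul_eq_mul] at hco
    rw [Oz_coeff_neg humem n hn,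
      coeff_mul_zero (Oz_coeff_neg hgmem) (Oz_coeff_neg httmem) (by omega)] at hco
    have h2 : (2:ℂ) ≠ 0 := two_ne_zero
    field_simp at hco
    simpa using hco.symm
  intro i j
  fin_cases i <;> fin_cases j
  · rw [show B ⟨0, by omega⟩ ⟨0, by omega⟩ = B 0 0 from rfl, hp]
    exact add_mem hfmem (mul_mem hgmem haOz)
  · rw [show B ⟨0, by omega⟩ ⟨1, by omega⟩ = B 0 1 from rfl, hq]
    exact mul_mem hgmem hbOz
  · rw [show B ⟨1, by omega⟩ ⟨0, by omega⟩ = B 1 0 from rfl, hr]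
    exact mul_mem hgmem hcOz
  · rw [show B ⟨1, by omega⟩ ⟨1, by omega⟩ = B 1 1 from rfl, hs]
    exact add_mem hfmem (mul_mem hgmem hddOz)


end
end

section
/- Let t, d ∈ ℂ[[z]] be such that t² − 4d has a simple zero at z = 0, and let A₀ ∈ M₂(ℂ[[z]]) satisfy tr A₀ = t and det A₀ = d. Then every B ∈ M₂(ℂ((z))) with A₀·B − B·A₀ ∈ M₂(ℂ[[z]]) can be written as B = S + T with S ∈ M₂(ℂ[[z]]) and T ∈ M₂(ℂ((z))) satisfying T·A₀ = A₀·T. -/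
open PowerSeries

noncomputable section

local notation "φ" => HahnSeries.ofPowerSeries ℤ ℂ

namespace Stmt4Aux

lemma coeff_one_mul_eq_zero {f h : PowerSeries ℂ} (hf : PowerSeries.coeff 0 f = 0)
    (hh : PowerSeries.coeff 0 h = 0) : PowerSeries.coeff 1 (f * h) = 0 := by
  rw [PowerSeries.coeff_mul]
  rw [show (1 : ℕ) = 0 + 1 from rfl, Finset.Nat.antidiagonal_succ]
  simp [hf, hh]

lemma exists_inv (m : PowerSeries ℂ) (hm : PowerSeries.coeff 0 m ≠ 0) :
    ∃ w ∈ Oz, w * φ m = 1 := by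
  have hu : IsUnit m := by
    rw [PowerSeries.isUnit_iff_constantCoeff]
    simpa [PowerSeries.coeff_zero_eq_constantCoeff] using isUnit_iff_ne_zero.mpr
      (by simpa [PowerSeries.coeff_zero_eq_constantCoeff] using hm)
  obtain ⟨u, rfl⟩ := hu
  refine ⟨φ ↑u⁻¹, ⟨_, rfl⟩, ?_⟩
  rw [← map_mul]
  simp

lemma finish (A₀ : Matrix (Fin 2) (Fin 2) (PowerSeries ℂ)) (B : Matrix (Fin 2) (Fin 2) K)
    (β : K)
    (h1 : B 0 1 - β * φ (A₀ 0 1) ∈ Oz)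
    (h2 : B 1 0 - β * φ (A₀ 1 0) ∈ Oz)
    (h3 : (B 0 0 - B 1 1) - β * (φ (A₀ 0 0) - φ (A₀ 1 1)) ∈ Oz) :
    ∃ S T : Matrix (Fin 2) (Fin 2) K,
      (∀ i j, S i j ∈ Oz) ∧
      T * A₀.map φ = A₀.map φ * T ∧
      B = S + T := by
  set α : K := B 0 0 - β * φ (A₀ 0 0) with hα
  set T : Matrix (Fin 2) (Fin 2) K :=
    !![β * φ (A₀ 0 0) + α, β * φ (A₀ 0 1); β * φ (A₀ 1 0), β * φ (A₀ 1 1) + α] with hT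
  have hT2 : T = β • A₀.map φ + α • (1 : Matrix (Fin 2) (Fin 2) K) := by
    ext i j
    fin_cases i <;> fin_cases j <;>
      simp [hT, Matrix.map_apply, Matrix.one_apply, Matrix.add_apply, Matrix.smul_apply]
  refine ⟨B - T, T, ?_, ?_, by abel⟩
  · intro i j
    fin_cases i <;> fin_cases j
    · show B 0 0 - (β * φ (A₀ 0 0) + α) ∈ Oz
      convert Oz.zero_mem using 1
      rw [hα]; ring
    · show B 0 1 - β * φ (A₀ 0 1) ∈ Oz
      exact h1
    · show B 1 0 - β * φ (A₀ 1 0) ∈ Oz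
      exact h2
    · show B 1 1 - (β * φ (A₀ 1 1) + α) ∈ Oz
      convert Oz.neg_mem h3 using 1
      rw [hα]; ring
  · ext i j : 2
    fin_cases i <;> fin_cases j <;>
      · simp only [hT, Matrix.mul_apply, Fin.sum_univ_two, Matrix.map_apply,
          Matrix.cons_val', Matrix.cons_val_zero, Matrix.cons_val_one, Matrix.head_cons,
          Matrix.empty_val', Matrix.cons_val_fin_one, Matrix.head_fin_const, Matrix.of_apply,
          Fin.isValue, Fin.mk_zero, Fin.mk_one]
        ring_nf

end Stmt4Aux

open Stmt4Aux in
/-- Under the non-degeneracy condition, every `B ∈ M₂(ℂ((z)))` with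
`[A₀, B] ∈ M₂(ℂ[[z]])` can be written as `B = S + T` with `S ∈ M₂(ℂ[[z]])` and `T`
commuting with `A₀`. -/
theorem stmt4 (t d : PowerSeries ℂ) (hsz : SimpleZero (t ^ 2 - 4 * d))
    (A₀ : Matrix (Fin 2) (Fin 2) (PowerSeries ℂ))
    (htr : A₀.trace = t) (hdet : A₀.det = d)
    (B : Matrix (Fin 2) (Fin 2) K)
    (hcomm : ∀ i j, (A₀.map (HahnSeries.ofPowerSeries ℤ ℂ) * B -
      B * A₀.map (HahnSeries.ofPowerSeries ℤ ℂ)) i j ∈ Oz) :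
    ∃ S T : Matrix (Fin 2) (Fin 2) K,
      (∀ i j, S i j ∈ Oz) ∧
      T * A₀.map (HahnSeries.ofPowerSeries ℤ ℂ) =
        A₀.map (HahnSeries.ofPowerSeries ℤ ℂ) * T ∧
      B = S + T := by
  classical
  have h00 : φ (A₀ 0 1) * B 1 0 - φ (A₀ 1 0) * B 0 1 ∈ Oz := by
    have h := hcomm 0 0
    simp only [Matrix.sub_apply, Matrix.mul_apply, Matrix.map_apply, Fin.sum_univ_two] at h
    convert h using 1; ring
  have h01 : (φ (A₀ 0 0) - φ (A₀ 1 1)) * B 0 1 - φ (A₀ 0 1) * (B 0 0 - B 1 1) ∈ Oz := by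
    have h := hcomm 0 1
    simp only [Matrix.sub_apply, Matrix.mul_apply, Matrix.map_apply, Fin.sum_univ_two] at h
    convert h using 1; ring
  have h10 : φ (A₀ 1 0) * (B 0 0 - B 1 1) - (φ (A₀ 0 0) - φ (A₀ 1 1)) * B 1 0 ∈ Oz := by
    have h := hcomm 1 0
    simp only [Matrix.sub_apply, Matrix.mul_apply, Matrix.map_apply, Fin.sum_univ_two] at h
    convert h using 1; ring
  -- nonvanishing of one of b, c, g at 0
  have hid : t ^ 2 - 4 * d =
      (A₀ 0 0 - A₀ 1 1) * (A₀ 0 0 - A₀ 1 1) + (4 * A₀ 0 1) * A₀ 1 0 := by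
    rw [← htr, ← hdet, Matrix.trace_fin_two, Matrix.det_fin_two]; ring
  have hnv : ¬(PowerSeries.coeff 0 (A₀ 0 0 - A₀ 1 1) = 0 ∧
      PowerSeries.coeff 0 (A₀ 0 1) = 0 ∧ PowerSeries.coeff 0 (A₀ 1 0) = 0) := by
    rintro ⟨hg, hb, hc⟩
    apply hsz.2
    rw [hid, map_add, coeff_one_mul_eq_zero hg hg, coeff_one_mul_eq_zero ?_ hc, add_zero]
    simp [PowerSeries.coeff_zero_eq_constantCoeff, map_mul,
      (PowerSeries.coeff_zero_eq_constantCoeff (R := ℂ)) ▸ hb]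
  by_cases hb : PowerSeries.coeff 0 (A₀ 0 1) ≠ 0
  · obtain ⟨w, hw, hw1⟩ := exists_inv _ hb
    apply finish A₀ B (w * B 0 1)
    · have e : B 0 1 - w * B 0 1 * φ (A₀ 0 1) = 0 := by
        linear_combination (-(B 0 1)) * hw1
      rw [e]; exact Oz.zero_mem
    · have e : B 1 0 - w * B 0 1 * φ (A₀ 1 0) =
          w * (φ (A₀ 0 1) * B 1 0 - φ (A₀ 1 0) * B 0 1) := by
        linear_combination (-(B 1 0)) * hw1
      rw [e]; exact Oz.mul_mem hw h00
    · have e : (B 0 0 - B 1 1) - w * B 0 1 * (φ (A₀ 0 0) - φ (A₀ 1 1)) =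
          -(w * ((φ (A₀ 0 0) - φ (A₀ 1 1)) * B 0 1 - φ (A₀ 0 1) * (B 0 0 - B 1 1))) := by
        linear_combination (-(B 0 0 - B 1 1)) * hw1
      rw [e]; exact Oz.neg_mem (Oz.mul_mem hw h01)
  · push_neg at hb
    by_cases hc : PowerSeries.coeff 0 (A₀ 1 0) ≠ 0
    · obtain ⟨w, hw, hw1⟩ := exists_inv _ hc
      apply finish A₀ B (w * B 1 0)
      · have e : B 0 1 - w * B 1 0 * φ (A₀ 0 1) =
            -(w * (φ (A₀ 0 1) * B 1 0 - φ (A₀ 1 0) * B 0 1)) := by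
          linear_combination (-(B 0 1)) * hw1
        rw [e]; exact Oz.neg_mem (Oz.mul_mem hw h00)
      · have e : B 1 0 - w * B 1 0 * φ (A₀ 1 0) = 0 := by
          linear_combination (-(B 1 0)) * hw1
        rw [e]; exact Oz.zero_mem
      · have e : (B 0 0 - B 1 1) - w * B 1 0 * (φ (A₀ 0 0) - φ (A₀ 1 1)) =
            w * (φ (A₀ 1 0) * (B 0 0 - B 1 1) - (φ (A₀ 0 0) - φ (A₀ 1 1)) * B 1 0) := by
          linear_combination (-(B 0 0 - B 1 1)) * hw1
        rw [e]; exact Oz.mul_mem hw h10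
    · push_neg at hc
      have hg : PowerSeries.coeff 0 (A₀ 0 0 - A₀ 1 1) ≠ 0 := by
        intro hg; exact hnv ⟨hg, hb, hc⟩
      obtain ⟨w, hw, hw1⟩ := exists_inv _ hg
      have hw1' : w * (φ (A₀ 0 0) - φ (A₀ 1 1)) = 1 := by
        rw [← map_sub]; exact hw1
      apply finish A₀ B (w * (B 0 0 - B 1 1))
      · have e : B 0 1 - w * (B 0 0 - B 1 1) * φ (A₀ 0 1) =
            w * ((φ (A₀ 0 0) - φ (A₀ 1 1)) * B 0 1 - φ (A₀ 0 1) * (B 0 0 - B 1 1)) := by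
          linear_combination (-(B 0 1)) * hw1'
        rw [e]; exact Oz.mul_mem hw h01
      · have e : B 1 0 - w * (B 0 0 - B 1 1) * φ (A₀ 1 0) =
            -(w * (φ (A₀ 1 0) * (B 0 0 - B 1 1) - (φ (A₀ 0 0) - φ (A₀ 1 1)) * B 1 0)) := by
          linear_combination (-(B 1 0)) * hw1'
        rw [e]; exact Oz.neg_mem (Oz.mul_mem hw h10)
      · have e : (B 0 0 - B 1 1) - w * (B 0 0 - B 1 1) * (φ (A₀ 0 0) - φ (A₀ 1 1)) = 0 := by
          linear_combination (-(B 0 0 - B 1 1)) * hw1'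
        rw [e]; exact Oz.zero_mem

end
end

section
/- Let A ∈ M₂(ℂ[[z,λ]]) be such that the discriminant (tr A(z,0))² − 4·det A(z,0) is a unit of ℂ[[z]] (its constant coefficient is nonzero). Then there exists a matrix R ∈ M₂(ℂ[[z,λ]]), invertible over ℂ[[z,λ]], such that Gauge_λ(A,R) = R⁻¹AR + λR⁻¹(dR/dz) is a diagonal matrix. -/
open PowerSeries

noncomputable section

/-- `K̂ = ℂ((z))[[λ]]`, formal power series in `λ` with Laurent series coefficients. -/
abbrev Khat : Type := PowerSeries K

/-- The `λ`-coefficientwise formal derivative `d/dz` on `ℂ((z))[[λ]]`. -/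
def pD (F : Khat) : Khat := PowerSeries.mk fun i => lD (PowerSeries.coeff i F)

/-- `F ∈ ℂ[[z,λ]]`: every `λ`-coefficient of `F` lies in `ℂ[[z]]`. -/
def MemOhat (F : Khat) : Prop := ∀ i, PowerSeries.coeff i F ∈ Oz

/-- The `λ`-gauge transform `Gauge_λ(A,R) = R⁻¹AR + λ·R⁻¹·(dR/dz)`. -/
def lamGauge (A R : Matrix (Fin 2) (Fin 2) Khat) : Matrix (Fin 2) (Fin 2) Khat :=
  R⁻¹ * A * R + (PowerSeries.X : Khat) • (R⁻¹ * R.map pD)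

/-- The constant term in `λ`: `F(z,0)`. -/
def ev0 : Khat →+* K := PowerSeries.constantCoeff

/-- The residue of a Laurent series: the coefficient of `z⁻¹`. -/
def res (f : K) : ℂ := f.coeff (-1)

/-- The residue of an element of `ℂ((z))[[λ]]`, an element of `ℂ[[λ]]`. -/
def resHat (F : Khat) : PowerSeries ℂ := PowerSeries.mk fun i => res (PowerSeries.coeff i F)

namespace Stmt7Aux


abbrev phiK : PowerSeries ℂ →+* K := HahnSeries.ofPowerSeries ℤ ℂ

lemma phiK_mem (x : PowerSeries ℂ) : phiK x ∈ Oz := ⟨x, rfl⟩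

lemma coeff_phiK (x : PowerSeries ℂ) (n : ℕ) :
    (phiK x).coeff (n : ℤ) = PowerSeries.coeff n x :=
  HahnSeries.ofPowerSeries_apply_coeff x n

lemma coeff_phiK_zero (x : PowerSeries ℂ) :
    (phiK x).coeff (0 : ℤ) = PowerSeries.constantCoeff x := by
  simpa using coeff_phiK x 0

lemma mem_Oz_iff {x : K} : x ∈ Oz ↔ ∀ n : ℤ, n < 0 → x.coeff n = 0 := by
  constructor
  · rintro ⟨p, rfl⟩ n hn
    rw [show (HahnSeries.ofPowerSeries ℤ ℂ) p = ((p : PowerSeries ℂ) : K) from rfl,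
      PowerSeries.coeff_coe, if_pos hn]
  · intro hx
    refine ⟨PowerSeries.mk (fun n => x.coeff (n : ℤ)), ?_⟩
    ext n
    rw [show (HahnSeries.ofPowerSeries ℤ ℂ) _ = ((_ : PowerSeries ℂ) : K) from rfl,
      PowerSeries.coeff_coe]
    split_ifs with h
    · exact (hx n h).symm
    · rw [PowerSeries.coeff_mk]
      congr 1
      omega

lemma lD_mem {x : K} (hx : x ∈ Oz) : lD x ∈ Oz := by
  rw [mem_Oz_iff] at hx ⊢
  intro n hn
  show ((n : ℂ) + 1) * x.coeff (n + 1) = 0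
  rcases lt_or_eq_of_le (by omega : n + 1 ≤ 0) with h | h
  · rw [hx _ h, mul_zero]
  · have : (n : ℂ) + 1 = 0 := by
      have : n = -1 := by omega
      simp [this]
    rw [this, zero_mul]

lemma inv_mem_Oz {x : K} (hx : x ∈ Oz) (h0 : x.coeff 0 ≠ 0) :
    x ≠ 0 ∧ x * x⁻¹ = 1 ∧ x⁻¹ ∈ Oz := by
  obtain ⟨p, rfl⟩ := hx
  have hc : PowerSeries.constantCoeff p ≠ 0 := by
    rw [← coeff_phiK_zero]; exact h0
  have hu : IsUnit p := PowerSeries.isUnit_iff_constantCoeff.mpr hc.isUnit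
  obtain ⟨u, rfl⟩ := hu
  have h1 : phiK (u : PowerSeries ℂ) * phiK ((u⁻¹ : Units (PowerSeries ℂ)) : PowerSeries ℂ) = 1 := by
    rw [← map_mul]; simp
  have hne : phiK (u : PowerSeries ℂ) ≠ 0 := by
    intro h; rw [h, zero_mul] at h1; exact zero_ne_one h1
  have hinv : (phiK (u : PowerSeries ℂ))⁻¹ = phiK ((u⁻¹ : Units (PowerSeries ℂ)) : PowerSeries ℂ) :=
    inv_eq_of_mul_eq_one_right h1
  exact ⟨hne, by rw [hinv]; exact h1, hinv ▸ phiK_mem _⟩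

/-- `ℂ[[z,λ]]` as a subring of `Khat`. -/
def Ohat : Subring Khat where
  carrier := {F | ∀ i, PowerSeries.coeff i F ∈ Oz}
  zero_mem' := by intro i; simp [Subring.zero_mem]
  one_mem' := by
    intro i
    rw [PowerSeries.coeff_one]
    split_ifs <;> simp [Subring.one_mem, Subring.zero_mem]
  add_mem' := by
    intro a b ha hb i
    rw [map_add]; exact Subring.add_mem _ (ha i) (hb i)
  neg_mem' := by
    intro a ha i
    rw [map_neg]; exact Subring.neg_mem _ (ha i)
  mul_mem' := by
    intro a b ha hb i
    rw [PowerSeries.coeff_mul]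
    exact Subring.sum_mem _ (fun p _ => Subring.mul_mem _ (ha p.1) (hb p.2))

lemma memOhat_iff {F : Khat} : MemOhat F ↔ F ∈ Ohat := Iff.rfl




def sqrtSeq (h : ℕ → ℂ) (w : ℂ) : ℕ → ℂ
  | 0 => w
  | (n+1) => (h (n+1) - ∑ k ∈ (Finset.range n).attach, sqrtSeq h w (k.1+1) * sqrtSeq h w (n - k.1))
      / (2*w)
  termination_by n => n
  decreasing_by
  · have := Finset.mem_range.mp k.2; omega
  · omega

lemma sqrtSeq_zero (h : ℕ → ℂ) (w : ℂ) : sqrtSeq h w 0 = w := by rw [sqrtSeq]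

lemma sqrtSeq_succ (h : ℕ → ℂ) (w : ℂ) (n : ℕ) :
    sqrtSeq h w (n+1) = (h (n+1) - ∑ k ∈ Finset.range n, sqrtSeq h w (k+1) * sqrtSeq h w (n - k))
      / (2*w) := by
  rw [sqrtSeq, Finset.sum_attach _ (fun k => sqrtSeq h w (k+1) * sqrtSeq h w (n - k))]

lemma sqrtSeq_spec (h : PowerSeries ℂ) (w : ℂ) (hw : w * w = PowerSeries.constantCoeff h)
    (hw0 : w ≠ 0) :
    (PowerSeries.mk (sqrtSeq (fun n => PowerSeries.coeff n h) w)) ^ 2 = h := by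
  have hs := sqrtSeq_succ (fun n => PowerSeries.coeff n h) w
  have h0 := sqrtSeq_zero (fun n => PowerSeries.coeff n h) w
  generalize hgen : sqrtSeq (fun n => PowerSeries.coeff n h) w = s at *
  ext n : 1
  rw [pow_two, PowerSeries.coeff_mul, Finset.Nat.sum_antidiagonal_eq_sum_range_succ_mk]
  simp only [PowerSeries.coeff_mk]
  cases n with
  | zero => simpa [h0] using hw
  | succ n =>
    rw [Finset.sum_range_succ, Finset.sum_range_succ']
    have hterm : ∀ k ∈ Finset.range n, s (k+1) * s (n+1-(k+1)) = s (k+1) * s (n-k) := by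
      intro k hk; congr 2; omega
    rw [Finset.sum_congr rfl hterm, Nat.sub_zero, Nat.sub_self, h0, hs n]
    field_simp
    ring

def invSeq (u : ℕ → K) : ℕ → K
  | 0 => (u 0)⁻¹
  | (n+1) => -(u 0)⁻¹ * ∑ k ∈ (Finset.range (n+1)).attach, u (k.1+1) * invSeq u (n - k.1)
  termination_by n => n
  decreasing_by omega

lemma invSeq_zero (u : ℕ → K) : invSeq u 0 = (u 0)⁻¹ := by rw [invSeq]

lemma invSeq_succ (u : ℕ → K) (n : ℕ) :
    invSeq u (n+1) = -(u 0)⁻¹ * ∑ k ∈ Finset.range (n+1), u (k+1) * invSeq u (n - k) := by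
  rw [invSeq, Finset.sum_attach _ (fun k => u (k+1) * invSeq u (n - k))]

lemma invSeq_spec (u : Khat) (hu : PowerSeries.coeff 0 u ≠ 0) :
    u * PowerSeries.mk (invSeq (fun n => PowerSeries.coeff n u)) = 1 := by
  have hs := invSeq_succ (fun n => PowerSeries.coeff n u)
  have h0 := invSeq_zero (fun n => PowerSeries.coeff n u)
  generalize hgen : invSeq (fun n => PowerSeries.coeff n u) = v at *
  ext n : 1
  rw [PowerSeries.coeff_mul, Finset.Nat.sum_antidiagonal_eq_sum_range_succ_mk]
  simp only [PowerSeries.coeff_mk]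
  cases n with
  | zero =>
    simp only [Finset.sum_range_one, Nat.sub_zero, h0]
    rw [mul_inv_cancel₀ hu, PowerSeries.coeff_one, if_pos rfl]
  | succ n =>
    rw [Finset.sum_range_succ']
    have hterm : ∀ k ∈ Finset.range (n+1),
        (PowerSeries.coeff (k+1) u) * v (n+1-(k+1)) = (PowerSeries.coeff (k+1) u) * v (n-k) := by
      intro k hk; congr 2; omega
    rw [Finset.sum_congr rfl hterm, Nat.sub_zero, hs n,
      PowerSeries.coeff_one, if_neg (Nat.succ_ne_zero n)]
    linear_combination (-(∑ x ∈ Finset.range (n+1), (PowerSeries.coeff (x+1)) u * v (n - x))) *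
      mul_inv_cancel₀ hu

lemma invSeq_mem (u : Khat) (hmem : MemOhat u) (hinv : (PowerSeries.coeff 0 u)⁻¹ ∈ Oz) :
    ∀ n, invSeq (fun n => PowerSeries.coeff n u) n ∈ Oz := by
  intro n
  induction n using Nat.strong_induction_on with
  | _ n ih =>
    cases n with
    | zero => rw [invSeq_zero]; exact hinv
    | succ n =>
      rw [invSeq_succ]
      exact Subring.mul_mem _ (Subring.neg_mem _ hinv)
        (Subring.sum_mem _ (fun k hk => Subring.mul_mem _ (hmem _)
          (ih (n - k) (by omega))))


lemma dep2 (v0 v1 w0 w1 : ℂ) (h : v0 * w1 - v1 * w0 = 0) (hv : ¬(v0 = 0 ∧ v1 = 0)) :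
    ∃ c, w0 = c * v0 ∧ w1 = c * v1 := by
  by_cases h0 : v0 = 0
  · subst h0
    have h1 : v1 ≠ 0 := fun hh => hv ⟨rfl, hh⟩
    refine ⟨w1 / v1, ?_, by field_simp⟩
    have hz : v1 * w0 = 0 := by linear_combination -h
    rcases mul_eq_zero.mp hz with hc | hc
    · exact absurd hc h1
    · rw [hc, mul_zero]
  · refine ⟨w0 / v0, by field_simp, ?_⟩
    field_simp
    linear_combination h

lemma eigen_indep (M0 : Matrix (Fin 2) (Fin 2) ℂ) (α β v0 v1 w0 w1 : ℂ)
    (hv0 : M0 0 0 * v0 + M0 0 1 * v1 = α * v0) (hv1 : M0 1 0 * v0 + M0 1 1 * v1 = α * v1)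
    (hw0 : M0 0 0 * w0 + M0 0 1 * w1 = β * w0) (hw1 : M0 1 0 * w0 + M0 1 1 * w1 = β * w1)
    (hvne : ¬(v0 = 0 ∧ v1 = 0)) (hwne : ¬(w0 = 0 ∧ w1 = 0)) (hab : α ≠ β) :
    v0 * w1 - v1 * w0 ≠ 0 := by
  intro h
  obtain ⟨c, hc0, hc1⟩ := dep2 v0 v1 w0 w1 h hvne
  have key0 : (α - β) * (c * v0) = 0 := by
    subst hc0; subst hc1; linear_combination hw0 - c * hv0
  have key1 : (α - β) * (c * v1) = 0 := by
    subst hc0; subst hc1; linear_combination hw1 - c * hv1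
  have hab' : α - β ≠ 0 := sub_ne_zero_of_ne hab
  have hcv0 : c * v0 = 0 := by rcases mul_eq_zero.mp key0 with h' | h'; exact absurd h' hab'; exact h'
  have hcv1 : c * v1 = 0 := by rcases mul_eq_zero.mp key1 with h' | h'; exact absurd h' hab'; exact h'
  exact hwne ⟨by rw [hc0, hcv0], by rw [hc1, hcv1]⟩

/-- Cayley–Hamilton for 2×2 matrices. -/
lemma ch2 {R : Type*} [CommRing R] (M : Matrix (Fin 2) (Fin 2) R) :
    M * M = M.trace • M - M.det • (1 : Matrix (Fin 2) (Fin 2) R) := by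
  ext i j
  fin_cases i <;> fin_cases j <;>
    simp [Matrix.mul_apply, Fin.sum_univ_two, Matrix.trace_fin_two, Matrix.det_fin_two,
      Matrix.one_apply, Matrix.smul_apply, smul_eq_mul] <;> ring

/-- Diagonalization over `ℂ⟦X⟧` when the discriminant is a unit. -/
theorem exists_diag (M : Matrix (Fin 2) (Fin 2) (PowerSeries ℂ)) (h : PowerSeries ℂ)
    (hh : M.trace ^ 2 - 4 * M.det = h) (h0 : PowerSeries.constantCoeff h ≠ 0) :
    ∃ (P : Matrix (Fin 2) (Fin 2) (PowerSeries ℂ)) (μ₁ μ₂ : PowerSeries ℂ),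
      M * P = P * Matrix.diagonal ![μ₁, μ₂] ∧
      PowerSeries.constantCoeff (μ₁ - μ₂) ≠ 0 ∧
      PowerSeries.constantCoeff P.det ≠ 0 := by
  classical
  obtain ⟨w, hw⟩ := IsAlgClosed.exists_pow_nat_eq (PowerSeries.constantCoeff h) (n := 2) two_pos
  have hw' : w * w = PowerSeries.constantCoeff h := by rw [← hw]; ring
  have hw0 : w ≠ 0 := by
    intro hwz; rw [hwz, zero_mul] at hw'; exact h0 hw'.symm
  set s : PowerSeries ℂ := PowerSeries.mk (sqrtSeq (fun n => PowerSeries.coeff n h) w) with hsdef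
  have hs2 : s ^ 2 = h := sqrtSeq_spec h w hw' hw0
  have hs0 : PowerSeries.constantCoeff s = w := by
    rw [hsdef, ← PowerSeries.coeff_zero_eq_constantCoeff_apply, PowerSeries.coeff_mk, sqrtSeq_zero]
  set half : PowerSeries ℂ := PowerSeries.C (2⁻¹ : ℂ) with hhalf
  have two_half : (2 : PowerSeries ℂ) * half = 1 := by
    rw [hhalf, show (2 : PowerSeries ℂ) = PowerSeries.C 2 from (map_ofNat _ 2).symm, ← map_mul]
    norm_num
  set μ₁ : PowerSeries ℂ := (M.trace + s) * half with hμ₁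
  set μ₂ : PowerSeries ℂ := (M.trace - s) * half with hμ₂
  have hsum : μ₁ + μ₂ = M.trace := by
    rw [hμ₁, hμ₂]; linear_combination M.trace * two_half
  have hdiff : μ₁ - μ₂ = s := by
    rw [hμ₁, hμ₂]; linear_combination s * two_half
  have he : s ^ 2 = M.trace ^ 2 - 4 * M.det := by rw [hs2, ← hh]
  have hprod : μ₁ * μ₂ = M.det := by
    rw [hμ₁, hμ₂]
    linear_combination (-(half * half)) * he + M.det * (2 * half + 1) * two_half
  -- key eigen-matrix identities
  have hCH := ch2 M
  have key1 : M * (M - μ₂ • 1) = μ₁ • (M - μ₂ • 1) := by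
    rw [mul_sub, Matrix.mul_smul, mul_one, hCH, ← hsum, ← hprod]
    have gen : ∀ (a b : PowerSeries ℂ) (X Y : Matrix (Fin 2) (Fin 2) (PowerSeries ℂ)),
        (a + b) • X - (a * b) • Y - b • X = a • (X - b • Y) := by
      intro a b X Y; rw [add_smul, mul_smul, smul_sub]; abel
    exact gen μ₁ μ₂ M 1
  have key2 : M * (M - μ₁ • 1) = μ₂ • (M - μ₁ • 1) := by
    rw [mul_sub, Matrix.mul_smul, mul_one, hCH, ← hsum, ← hprod]
    have gen2 : ∀ (a b : PowerSeries ℂ) (X Y : Matrix (Fin 2) (Fin 2) (PowerSeries ℂ)),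
        (b + a) • X - (b * a) • Y - b • X = a • (X - b • Y) := by
      intro a b X Y; rw [add_smul, mul_comm b a, mul_smul, smul_sub]; abel
    exact gen2 μ₂ μ₁ M 1
  set N₁ : Matrix (Fin 2) (Fin 2) (PowerSeries ℂ) := M - μ₂ • 1 with hN₁
  set N₂ : Matrix (Fin 2) (Fin 2) (PowerSeries ℂ) := M - μ₁ • 1 with hN₂
  have e1 : ∀ i, M i 0 * N₁ 0 0 * 0 = 0 := by intro i; ring
  clear e1
  have e1 : ∀ (i : Fin 2) (j₁ : Fin 2),
      M i 0 * N₁ 0 j₁ + M i 1 * N₁ 1 j₁ = μ₁ * N₁ i j₁ := by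
    intro i j₁
    have hk := congrFun (congrFun key1 i) j₁
    simpa [Matrix.mul_apply, Fin.sum_univ_two, Matrix.smul_apply, smul_eq_mul] using hk
  have e2 : ∀ (i : Fin 2) (j₂ : Fin 2),
      M i 0 * N₂ 0 j₂ + M i 1 * N₂ 1 j₂ = μ₂ * N₂ i j₂ := by
    intro i j₂
    have hk := congrFun (congrFun key2 i) j₂
    simpa [Matrix.mul_apply, Fin.sum_univ_two, Matrix.smul_apply, smul_eq_mul] using hk
  -- constant terms
  set ε : PowerSeries ℂ →+* ℂ := (PowerSeries.constantCoeff) with hε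
  have habw : ε μ₁ - ε μ₂ = w := by
    rw [← map_sub, hdiff, hε, hs0]
  have hab : ε μ₁ ≠ ε μ₂ := by
    intro hc; rw [hc, sub_self] at habw; exact hw0 habw.symm
  -- choose a nonzero column of N₁ at z = 0
  have hNz : ∀ (N : Matrix (Fin 2) (Fin 2) (PowerSeries ℂ)) (μ ν : PowerSeries ℂ),
      N = M - ν • 1 → μ + ν = M.trace → μ ≠ ν → ε μ ≠ ε ν →
      ∃ i j, ε (N i j) ≠ 0 := by
    intro N μ ν hN htr hμν hεμν
    by_contra hcon
    push_neg at hcon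
    have h00 : ε (M 0 0) = ε ν := by
      have := hcon 0 0
      rw [hN] at this
      simp only [Matrix.sub_apply, Matrix.smul_apply, Matrix.one_apply_eq, smul_eq_mul, mul_one,
        map_sub] at this
      exact sub_eq_zero.mp this
    have h11 : ε (M 1 1) = ε ν := by
      have := hcon 1 1
      rw [hN] at this
      simp only [Matrix.sub_apply, Matrix.smul_apply, Matrix.one_apply_eq, smul_eq_mul, mul_one,
        map_sub] at this
      exact sub_eq_zero.mp this
    have htr' : ε μ + ε ν = ε (M 0 0) + ε (M 1 1) := by
      rw [← map_add, ← map_add, htr]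
      congr 1
      rw [Matrix.trace_fin_two]
    rw [h00, h11] at htr'
    apply hεμν
    linear_combination htr'
  obtain ⟨i₁, j₁, hij1⟩ := hNz N₁ μ₁ μ₂ hN₁ hsum
    (fun hc => hab (by rw [hc])) hab
  obtain ⟨i₂, j₂, hij2⟩ := hNz N₂ μ₂ μ₁ hN₂ (by rw [add_comm]; exact hsum)
    (fun hc => hab (by rw [hc])) (Ne.symm hab)
  refine ⟨Matrix.of ![![N₁ 0 j₁, N₂ 0 j₂], ![N₁ 1 j₁, N₂ 1 j₂]], μ₁, μ₂, ?_, ?_, ?_⟩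
  · refine Matrix.ext fun i j => ?_
    fin_cases i <;> fin_cases j <;>
      simp [Matrix.mul_apply, Fin.sum_univ_two, Matrix.diagonal_apply] <;>
      first
        | linear_combination e1 0 j₁
        | linear_combination e1 1 j₁
        | linear_combination e2 0 j₂
        | linear_combination e2 1 j₂
  · rw [hdiff, hs0]; exact hw0
  · rw [Matrix.det_fin_two]
    simp only [Matrix.of_apply, Matrix.cons_val', Matrix.cons_val_zero, Matrix.cons_val_one,
      Matrix.head_cons, Matrix.empty_val', Matrix.cons_val_fin_one, Matrix.head_fin_const]
    rw [map_sub, map_mul, map_mul]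
    have hv1' := fun i => congrArg ε (e1 i j₁)
    have hv2' := fun i => congrArg ε (e2 i j₂)
    simp only [map_add, map_mul] at hv1' hv2'
    have hvne : ¬(ε (N₁ 0 j₁) = 0 ∧ ε (N₁ 1 j₁) = 0) := by
      rintro ⟨hz0, hz1⟩
      fin_cases i₁
      · exact hij1 hz0
      · exact hij1 hz1
    have hwne : ¬(ε (N₂ 0 j₂) = 0 ∧ ε (N₂ 1 j₂) = 0) := by
      rintro ⟨hz0, hz1⟩
      fin_cases i₂
      · exact hij2 hz0
      · exact hij2 hz1
    have := eigen_indep (M.map ε) (ε μ₁) (ε μ₂)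
      (ε (N₁ 0 j₁)) (ε (N₁ 1 j₁)) (ε (N₂ 0 j₂)) (ε (N₂ 1 j₂))
      (by simpa [Matrix.map_apply] using hv1' 0)
      (by simpa [Matrix.map_apply] using hv1' 1)
      (by simpa [Matrix.map_apply] using hv2' 0)
      (by simpa [Matrix.map_apply] using hv2' 1)
      hvne hwne hab
    intro hcontra
    apply this
    linear_combination hcontra



abbrev MatK := Matrix (Fin 2) (Fin 2) K

def Yof (δi : K) (H : MatK) : MatK :=
  Matrix.of fun i j =>
    if i = j then 0 else if i = 0 then -(δi * H 0 1) else δi * H 1 0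

def Gdef (a : ℕ → MatK) (S : ℕ → MatK × MatK) (n : ℕ) : MatK :=
  (∑ k ∈ Finset.range (n+1), a (k+1) * (S (n-k)).1) + ((S n).1.map lD)
    - ∑ k ∈ Finset.range n, (S (k+1)).1 * (S (n-k)).2

def seq (a : ℕ → MatK) (P Δ Q : MatK) (δi : K) : ℕ → MatK × MatK
  | 0 => (P, Δ)
  | (n+1) =>
    let H : MatK := Q * ((∑ k ∈ (Finset.range (n+1)).attach,
        a (k.1+1) * (seq a P Δ Q δi (n - k.1)).1)
      + ((seq a P Δ Q δi n).1.map lD)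
      - ∑ k ∈ (Finset.range n).attach, (seq a P Δ Q δi (k.1+1)).1 * (seq a P Δ Q δi (n - k.1)).2)
    (P * Yof δi H, Matrix.diagonal ![H 0 0, H 1 1])
  termination_by n => n
  decreasing_by
  · omega
  · omega
  · have := Finset.mem_range.mp k.2; omega
  · omega

lemma seq_zero (a : ℕ → MatK) (P Δ Q : MatK) (δi : K) : seq a P Δ Q δi 0 = (P, Δ) := by
  rw [seq]

lemma seq_succ (a : ℕ → MatK) (P Δ Q : MatK) (δi : K) (n : ℕ) :
    seq a P Δ Q δi (n+1) =
      (P * Yof δi (Q * Gdef a (seq a P Δ Q δi) n),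
       Matrix.diagonal ![(Q * Gdef a (seq a P Δ Q δi) n) 0 0,
         (Q * Gdef a (seq a P Δ Q δi) n) 1 1]) := by
  rw [seq]
  simp only [Gdef]
  rw [Finset.sum_attach _ (fun k => a (k+1) * (seq a P Δ Q δi (n-k)).1),
    Finset.sum_attach _ (fun k => (seq a P Δ Q δi (k+1)).1 * (seq a P Δ Q δi (n-k)).2)]

lemma comm_solve (m1 m2 δi : K) (hδ : (m1 - m2) * δi = 1) (H : MatK) :
    H + (Matrix.diagonal ![m1, m2]) * (Yof δi H)
      = Matrix.diagonal ![H 0 0, H 1 1] + (Yof δi H) * Matrix.diagonal ![m1, m2] := by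
  refine Matrix.ext fun i j => ?_
  fin_cases i <;> fin_cases j <;>
    simp [Yof, Matrix.mul_apply, Fin.sum_univ_two, Matrix.diagonal_apply]
  · linear_combination (-(H 0 1)) * hδ
  · linear_combination (-(H 1 0)) * hδ

/-- The key convolution identity for the recursively constructed gauge. -/
lemma seq_key (a : ℕ → MatK) (P Δ Q : MatK) (m1 m2 δi : K)
    (hΔ : Δ = Matrix.diagonal ![m1, m2])
    (hPQ : P * Q = 1)
    (hδ : (m1 - m2) * δi = 1)
    (hbase : a 0 * P = P * Δ) (n : ℕ) :
    (∑ pq ∈ Finset.HasAntidiagonal.antidiagonal n, a pq.1 * (seq a P Δ Q δi pq.2).1)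
      + (match n with | 0 => (0 : MatK) | (m+1) => ((seq a P Δ Q δi m).1.map lD))
    = ∑ pq ∈ Finset.HasAntidiagonal.antidiagonal n, (seq a P Δ Q δi pq.1).1 * (seq a P Δ Q δi pq.2).2 := by
  cases n with
  | zero =>
    simp only [Finset.Nat.antidiagonal_zero, Finset.sum_singleton, seq_zero, add_zero]
    exact hbase
  | succ n =>
    set S := seq a P Δ Q δi with hS
    rw [Finset.Nat.sum_antidiagonal_eq_sum_range_succ_mk,
      Finset.Nat.sum_antidiagonal_eq_sum_range_succ_mk]
    -- LHS : peel k = 0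
    rw [Finset.sum_range_succ' (fun k => a k * (S (n+1-k)).1) (n+1)]
    -- RHS : peel last and first
    rw [Finset.sum_range_succ (fun k => (S k).1 * (S (n+1-k)).2) (n+1)]
    rw [Finset.sum_range_succ' (fun k => (S k).1 * (S (n+1-k)).2) n]
    have hidx : ∀ k, n + 1 - (k+1) = n - k := fun k => by omega
    simp only [hidx, Nat.sub_zero, Nat.sub_self]
    -- use the recursion step
    have hsucc := seq_succ a P Δ Q δi n
    set G := Gdef a S n with hG
    set H := Q * G with hH
    have hR1 : (S (n+1)).1 = P * Yof δi H := by rw [hS, hsucc]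
    have hD1 : (S (n+1)).2 = Matrix.diagonal ![H 0 0, H 1 1] := by rw [hS, hsucc]
    have hS0 : S 0 = (P, Δ) := seq_zero a P Δ Q δi
    rw [hR1, hD1, hS0]
    have hGPH : P * H = G := by rw [hH, ← Matrix.mul_assoc, hPQ, Matrix.one_mul]
    have hGdef : G = (∑ k ∈ Finset.range (n+1), a (k+1) * (S (n-k)).1) + ((S n).1.map lD)
        - ∑ k ∈ Finset.range n, (S (k+1)).1 * (S (n-k)).2 := by rw [hG, Gdef]
    have hbase' : a 0 * (P * Yof δi H) = P * (Matrix.diagonal ![m1, m2] * Yof δi H) := by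
      rw [← Matrix.mul_assoc, hbase, hΔ, Matrix.mul_assoc]
    have hcomm := comm_solve m1 m2 δi hδ H
    -- goal: ∑ + a0 * (P*Y) + lD = ∑ + P * diag + (P*Y) * Δ
    rw [hbase', hΔ]
    have expand : P * (Matrix.diagonal ![m1, m2] * Yof δi H)
        = P * Matrix.diagonal ![H 0 0, H 1 1] + P * (Yof δi H * Matrix.diagonal ![m1, m2]) - P * H := by
      rw [← Matrix.mul_add, ← Matrix.mul_sub]
      congr 1
      rw [← hcomm]
      abel
    rw [expand, hGPH, hGdef]
    have hmulassoc : P * Yof δi H * Matrix.diagonal ![m1, m2]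
        = P * (Yof δi H * Matrix.diagonal ![m1, m2]) := Matrix.mul_assoc _ _ _
    rw [hmulassoc]
    abel



lemma matmul_mem {A B : MatK} (hA : ∀ i j, A i j ∈ Oz) (hB : ∀ i j, B i j ∈ Oz) :
    ∀ i j, (A * B) i j ∈ Oz := by
  intro i j
  rw [Matrix.mul_apply]
  exact Subring.sum_mem _ fun k _ => Subring.mul_mem _ (hA i k) (hB k j)

lemma seq_mem (a : ℕ → MatK) (P Δ Q : MatK) (δi : K)
    (ha : ∀ n i j, a n i j ∈ Oz) (hP : ∀ i j, P i j ∈ Oz) (hΔm : ∀ i j, Δ i j ∈ Oz)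
    (hQ : ∀ i j, Q i j ∈ Oz) (hδi : δi ∈ Oz) :
    ∀ n i j, (seq a P Δ Q δi n).1 i j ∈ Oz ∧ (seq a P Δ Q δi n).2 i j ∈ Oz := by
  intro n
  induction n using Nat.strong_induction_on with
  | _ n ih =>
    cases n with
    | zero =>
      intro i j
      rw [seq_zero]
      exact ⟨hP i j, hΔm i j⟩
    | succ n =>
      have hG : ∀ i j, (Gdef a (seq a P Δ Q δi) n) i j ∈ Oz := by
        intro i j
        rw [Gdef]
        rw [Matrix.sub_apply, Matrix.add_apply, Matrix.sum_apply, Matrix.sum_apply]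
        refine Subring.sub_mem _ (Subring.add_mem _ ?_ ?_) ?_
        · exact Subring.sum_mem _ fun k hk => matmul_mem (ha (k+1))
            (fun i j => (ih (n-k) (by omega) i j).1) i j
        · rw [Matrix.map_apply]
          exact lD_mem (ih n (by omega) i j).1
        · exact Subring.sum_mem _ fun k hk =>
            matmul_mem (fun i j => (ih (k+1) (by
              have := Finset.mem_range.mp hk; omega) i j).1)
              (fun i j => (ih (n-k) (by omega) i j).2) i j
      have hH : ∀ i j, (Q * Gdef a (seq a P Δ Q δi) n) i j ∈ Oz := matmul_mem hQ hG
      have hY : ∀ i j, (Yof δi (Q * Gdef a (seq a P Δ Q δi) n)) i j ∈ Oz := by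
        intro i j
        show (if i = j then 0 else if i = 0 then _ else _) ∈ Oz
        split_ifs
        · exact Subring.zero_mem _
        · exact Subring.neg_mem _ (Subring.mul_mem _ hδi (hH 0 1))
        · exact Subring.mul_mem _ hδi (hH 1 0)
      intro i j
      rw [seq_succ]
      constructor
      · exact matmul_mem hP hY i j
      · show Matrix.diagonal _ i j ∈ Oz
        rcases eq_or_ne i j with rfl | hij
        · rw [Matrix.diagonal_apply_eq]
          fin_cases i
          · exact hH 0 0
          · exact hH 1 1
        · rw [Matrix.diagonal_apply_ne _ hij]
          exact Subring.zero_mem _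

lemma seq_snd_offdiag (a : ℕ → MatK) (P Q : MatK) (m1 m2 δi : K) :
    ∀ n i j, i ≠ j → (seq a P (Matrix.diagonal ![m1, m2]) Q δi n).2 i j = 0 := by
  intro n i j hij
  cases n with
  | zero => rw [seq_zero]; exact Matrix.diagonal_apply_ne _ hij
  | succ n => rw [seq_succ]; exact Matrix.diagonal_apply_ne _ hij

lemma coeff_matmul (M N : Matrix (Fin 2) (Fin 2) Khat) (n : ℕ) (i j : Fin 2) :
    PowerSeries.coeff n ((M * N) i j)
      = ∑ pq ∈ Finset.HasAntidiagonal.antidiagonal n,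
          (M.map (PowerSeries.coeff pq.1) * N.map (PowerSeries.coeff pq.2)) i j := by
  rw [Matrix.mul_apply, map_sum]
  simp only [PowerSeries.coeff_mul]
  rw [Finset.sum_comm]
  refine Finset.sum_congr rfl fun pq _ => ?_
  rw [Matrix.mul_apply]
  refine Finset.sum_congr rfl fun k _ => ?_
  simp [Matrix.map_apply]


end Stmt7Aux


open Stmt7Aux in
theorem stmt7_aux (A : Matrix (Fin 2) (Fin 2) Khat) (hA : ∀ i j, MemOhat (A i j))
    (hdisc : ∃ h : PowerSeries ℂ,
      (A.map ev0).trace ^ 2 - 4 * (A.map ev0).det = HahnSeries.ofPowerSeries ℤ ℂ h ∧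
      PowerSeries.coeff 0 h ≠ 0) :
    ∃ R : Matrix (Fin 2) (Fin 2) Khat,
      (∀ i j, MemOhat (R i j)) ∧
      (∃ S : Matrix (Fin 2) (Fin 2) Khat, (∀ i j, MemOhat (S i j)) ∧
        R * S = 1 ∧ S * R = 1) ∧
      (∀ i j, i ≠ j → lamGauge A R i j = 0) := by
  classical
  obtain ⟨h, hh, h0⟩ := hdisc
  have h0' : PowerSeries.constantCoeff h ≠ 0 := by
    rwa [← PowerSeries.coeff_zero_eq_constantCoeff_apply]
  -- entries of A(z,0) lie in Oz
  have hA0 : ∀ i j, (A.map ev0) i j ∈ Oz := by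
    intro i j
    have h1 := hA i j 0
    have h2 : (A.map ev0) i j = PowerSeries.coeff 0 (A i j) := by
      simp [Matrix.map_apply, ev0, PowerSeries.coeff_zero_eq_constantCoeff]
    rwa [h2]
  -- lift A(z,0) to ℂ⟦X⟧
  have hA0' : ∀ i j, ∃ p : PowerSeries ℂ, phiK p = (A.map ev0) i j :=
    fun i j => RingHom.mem_range.mp (hA0 i j)
  choose Mp hMp using hA0'
  set M : Matrix (Fin 2) (Fin 2) (PowerSeries ℂ) := Matrix.of Mp with hMdef
  have hmap : M.map phiK = A.map ev0 := by
    refine Matrix.ext fun i j => ?_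
    simp [Matrix.map_apply, hMdef, hMp]
  have htr : phiK M.trace = (A.map ev0).trace := by
    rw [← hmap, Matrix.trace_fin_two, Matrix.trace_fin_two, map_add]
    simp [Matrix.map_apply]
  have hdet : phiK M.det = (A.map ev0).det := by
    rw [← hmap, RingHom.map_det, RingHom.mapMatrix_apply]
  have htd : M.trace ^ 2 - 4 * M.det = h := by
    apply HahnSeries.ofPowerSeries_injective (Γ := ℤ) (R := ℂ)
    have : phiK (M.trace ^ 2 - 4 * M.det) = phiK M.trace ^ 2 - 4 * phiK M.det := by
      rw [map_sub, map_pow, map_mul, map_ofNat]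
    rw [this, htr, hdet]
    exact hh
  obtain ⟨P', μ₁, μ₂, hdiag, hdne, hdetP'⟩ := exists_diag M h htd h0'
  -- push to K
  set P : MatK := P'.map phiK with hPdef
  set m1 : K := phiK μ₁ with hm1
  set m2 : K := phiK μ₂ with hm2
  set Δ : MatK := Matrix.diagonal ![m1, m2] with hΔdef
  have hdiagmap : (Matrix.diagonal ![μ₁, μ₂]).map phiK = Δ := by
    have hv : (fun m => phiK (![μ₁, μ₂] m)) = ![m1, m2] := by
      funext i; fin_cases i <;> simp [hm1, hm2]
    rw [Matrix.diagonal_map (map_zero phiK), hv, hΔdef]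
  have hbaseK : (A.map ev0) * P = P * Δ := by
    rw [← hmap, hPdef, ← Matrix.map_mul, hdiag, Matrix.map_mul, hdiagmap]
  have hPOz : ∀ i j, P i j ∈ Oz := by
    intro i j
    rw [hPdef, Matrix.map_apply]
    exact phiK_mem _
  -- inverse of P
  have hdetPphi : P.det = phiK P'.det := by
    rw [hPdef, RingHom.map_det, RingHom.mapMatrix_apply]
  have hdetPOz : P.det ∈ Oz := by rw [hdetPphi]; exact phiK_mem _
  have hdetPc : P.det.coeff 0 ≠ 0 := by
    rw [hdetPphi, coeff_phiK_zero]
    exact hdetP'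
  obtain ⟨hdPne, hdPmul, hdPinvOz⟩ := inv_mem_Oz hdetPOz hdetPc
  set Q : MatK := P.det⁻¹ • P.adjugate with hQdef
  have hPQ : P * Q = 1 := by
    rw [hQdef, Matrix.mul_smul P P.det⁻¹ P.adjugate, Matrix.mul_adjugate, smul_smul P.det⁻¹ P.det (1 : MatK),
      mul_comm P.det⁻¹, hdPmul, one_smul]
  have hQP : Q * P = 1 := by
    rw [hQdef, Matrix.smul_mul P.det⁻¹ P.adjugate P, Matrix.adjugate_mul, smul_smul P.det⁻¹ P.det (1 : MatK),
      mul_comm P.det⁻¹, hdPmul, one_smul]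
  have hQOz : ∀ i j, Q i j ∈ Oz := by
    intro i j
    rw [hQdef, Matrix.smul_apply, smul_eq_mul]
    refine Subring.mul_mem _ hdPinvOz ?_
    rw [Matrix.adjugate_fin_two]
    fin_cases i <;> fin_cases j <;>
      simp only [Matrix.of_apply, Matrix.cons_val', Matrix.cons_val_zero, Matrix.cons_val_one,
        Matrix.head_cons, Matrix.empty_val', Matrix.cons_val_fin_one, Matrix.head_fin_const] <;>
      first
        | exact hPOz _ _
        | exact Subring.neg_mem _ (hPOz _ _)
  -- the eigenvalue difference
  have hδphi : m1 - m2 = phiK (μ₁ - μ₂) := by rw [map_sub]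
  have hδOz : m1 - m2 ∈ Oz := by rw [hδphi]; exact phiK_mem _
  have hδc : (m1 - m2).coeff 0 ≠ 0 := by
    rw [hδphi, coeff_phiK_zero]
    exact hdne
  obtain ⟨hδne, hδmul, hδinvOz⟩ := inv_mem_Oz hδOz hδc
  set δi : K := (m1 - m2)⁻¹ with hδidef
  have hδ : (m1 - m2) * δi = 1 := hδmul
  -- coefficient matrices of A
  set a : ℕ → MatK := fun n => A.map (PowerSeries.coeff n) with hadef
  have ha0 : a 0 = A.map ev0 := by
    refine Matrix.ext fun i j => ?_
    simp [hadef, Matrix.map_apply, ev0, PowerSeries.coeff_zero_eq_constantCoeff]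
  have haOz : ∀ n i j, a n i j ∈ Oz := fun n i j => hA i j n
  -- the recursion
  set Rm : ℕ → MatK := fun n => (seq a P Δ Q δi n).1 with hRmdef
  set Dm : ℕ → MatK := fun n => (seq a P Δ Q δi n).2 with hDmdef
  have hmem := seq_mem a P Δ Q δi haOz hPOz
    (by
      intro i j
      rw [hΔdef]
      rcases eq_or_ne i j with rfl | hij
      · rw [Matrix.diagonal_apply_eq]
        fin_cases i
        · simpa [hm1] using phiK_mem μ₁
        · simpa [hm2] using phiK_mem μ₂
      · rw [Matrix.diagonal_apply_ne _ hij]; exact Subring.zero_mem _)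
    hQOz hδinvOz
  set R : Matrix (Fin 2) (Fin 2) Khat :=
    Matrix.of fun i j => PowerSeries.mk fun n => Rm n i j with hRdef
  set D : Matrix (Fin 2) (Fin 2) Khat :=
    Matrix.of fun i j => PowerSeries.mk fun n => Dm n i j with hDdef
  have hRcoeff : ∀ p, R.map (PowerSeries.coeff p) = Rm p := by
    intro p
    refine Matrix.ext fun i j => ?_
    simp [hRdef, Matrix.map_apply, PowerSeries.coeff_mk]
  have hDcoeff : ∀ p, D.map (PowerSeries.coeff p) = Dm p := by
    intro p
    refine Matrix.ext fun i j => ?_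
    simp [hDdef, Matrix.map_apply, PowerSeries.coeff_mk]
  have hAcoeff : ∀ p, A.map (PowerSeries.coeff p) = a p := fun p => rfl
  -- the main identity
  have hmain : A * R + (PowerSeries.X : Khat) • (R.map pD) = R * D := by
    refine Matrix.ext fun i j => ?_
    refine PowerSeries.ext fun n => ?_
    have hkey := seq_key a P Δ Q m1 m2 δi rfl hPQ hδ (by rw [ha0]; exact hbaseK) n
    have hkey' := congrArg (fun (M : MatK) => M i j) hkey
    simp only [Matrix.add_apply, Matrix.sum_apply] at hkey'
    rw [Matrix.add_apply, map_add, coeff_matmul, coeff_matmul]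
    simp only [hAcoeff, hRcoeff, hDcoeff]
    have hXterm : PowerSeries.coeff n (((PowerSeries.X : Khat) • (R.map pD)) i j)
        = ((match n with | 0 => (0 : MatK) | (m+1) => ((seq a P Δ Q δi m).1.map lD)) i j) := by
      rw [Matrix.smul_apply, smul_eq_mul]
      cases n with
      | zero =>
        rw [PowerSeries.coeff_zero_X_mul]
        simp
      | succ m =>
        rw [PowerSeries.coeff_succ_X_mul]
        have : (R.map pD) i j = pD (R i j) := rfl
        rw [this]
        have : PowerSeries.coeff m (pD (R i j)) = lD (PowerSeries.coeff m (R i j)) := by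
          rw [pD, PowerSeries.coeff_mk]
        rw [this]
        have : PowerSeries.coeff m (R i j) = Rm m i j := by
          simp [hRdef, PowerSeries.coeff_mk]
        rw [this]
        simp [Matrix.map_apply, hRmdef]
    rw [hXterm]
    exact hkey'
  -- membership for R and D
  have hROhat : ∀ i j, MemOhat (R i j) := by
    intro i j p
    have : PowerSeries.coeff p (R i j) = Rm p i j := by
      simp [hRdef, PowerSeries.coeff_mk]
    rw [this]
    exact (hmem p i j).1
  have hDOhat : ∀ i j, MemOhat (D i j) := by
    intro i j p
    have : PowerSeries.coeff p (D i j) = Dm p i j := by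
      simp [hDdef, PowerSeries.coeff_mk]
    rw [this]
    exact (hmem p i j).2
  -- invertibility of R
  have hRdetOhat : MemOhat R.det := by
    rw [memOhat_iff, Matrix.det_fin_two]
    exact Subring.sub_mem _
      (Subring.mul_mem _ (hROhat 0 0) (hROhat 1 1))
      (Subring.mul_mem _ (hROhat 0 1) (hROhat 1 0))
  have hRdet0 : PowerSeries.coeff 0 R.det = P.det := by
    rw [Matrix.det_fin_two, Matrix.det_fin_two]
    have e : ∀ (i j : Fin 2), PowerSeries.coeff 0 (R i j) = P i j := by
      intro i j
      have h1 : PowerSeries.coeff 0 (R i j) = Rm 0 i j := by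
        simp [hRdef, PowerSeries.coeff_mk]
      rw [h1]
      simp only [hRmdef]
      rw [seq_zero]
    rw [map_sub, PowerSeries.coeff_mul, PowerSeries.coeff_mul]
    simp only [Finset.Nat.antidiagonal_zero, Finset.sum_singleton, e]
  have hRdetc : PowerSeries.coeff 0 R.det ≠ 0 := by rw [hRdet0]; exact hdPne
  set v : Khat := PowerSeries.mk (invSeq (fun n => PowerSeries.coeff n R.det)) with hvdef
  have hv : R.det * v = 1 := invSeq_spec R.det hRdetc
  have hvOhat : MemOhat v := by
    intro p
    rw [hvdef, PowerSeries.coeff_mk]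
    refine invSeq_mem R.det hRdetOhat ?_ p
    rw [hRdet0]
    exact hdPinvOz
  set Smat : Matrix (Fin 2) (Fin 2) Khat := v • R.adjugate with hSdef
  have hRS : R * Smat = 1 := by
    rw [hSdef, Matrix.mul_smul R v R.adjugate, Matrix.mul_adjugate, smul_smul v R.det (1 : Matrix (Fin 2) (Fin 2) Khat), mul_comm v, hv,
      one_smul]
  have hSR : Smat * R = 1 := by
    rw [hSdef, Matrix.smul_mul v R.adjugate R, Matrix.adjugate_mul, smul_smul v R.det (1 : Matrix (Fin 2) (Fin 2) Khat), mul_comm v, hv,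
      one_smul]
  have hSOhat : ∀ i j, MemOhat (Smat i j) := by
    intro i j
    rw [hSdef, Matrix.smul_apply, smul_eq_mul, memOhat_iff]
    refine Subring.mul_mem _ hvOhat ?_
    rw [Matrix.adjugate_fin_two]
    fin_cases i <;> fin_cases j <;>
      simp only [Matrix.of_apply, Matrix.cons_val', Matrix.cons_val_zero, Matrix.cons_val_one,
        Matrix.head_cons, Matrix.empty_val', Matrix.cons_val_fin_one, Matrix.head_fin_const] <;>
      first
        | exact hROhat _ _
        | exact Subring.neg_mem _ (hROhat _ _)
  -- conclusion
  refine ⟨R, hROhat, ⟨Smat, hSOhat, hRS, hSR⟩, ?_⟩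
  have hRinv : R⁻¹ = Smat := Matrix.inv_eq_right_inv hRS
  have hgauge : lamGauge A R = D := by
    rw [lamGauge, hRinv]
    calc Smat * A * R + (PowerSeries.X : Khat) • (Smat * R.map pD)
        = Smat * (A * R + (PowerSeries.X : Khat) • (R.map pD)) := by
          rw [Matrix.mul_add, Matrix.mul_smul Smat (PowerSeries.X : Khat) (R.map pD),
            Matrix.mul_assoc]
      _ = Smat * (R * D) := by rw [hmain]
      _ = (Smat * R) * D := by rw [Matrix.mul_assoc]
      _ = D := by rw [hSR, Matrix.one_mul]
  intro i j hij
  rw [hgauge]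
  have : D i j = PowerSeries.mk fun n => Dm n i j := by simp [hDdef]
  rw [this]
  refine PowerSeries.ext fun n => ?_
  rw [PowerSeries.coeff_mk, map_zero]
  simp only [hDmdef]
  exact seq_snd_offdiag a P Q m1 m2 δi n i j hij

/-- If `A ∈ M₂(ℂ[[z,λ]])` has discriminant `(tr A(z,0))² - 4 det A(z,0)`
a unit of `ℂ[[z]]`, then there is an invertible `R ∈ M₂(ℂ[[z,λ]])` such that
`Gauge_λ(A,R)` is diagonal. -/
theorem stmt7 (A : Matrix (Fin 2) (Fin 2) Khat) (hA : ∀ i j, MemOhat (A i j))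
    (hdisc : ∃ h : PowerSeries ℂ,
      (A.map ev0).trace ^ 2 - 4 * (A.map ev0).det = HahnSeries.ofPowerSeries ℤ ℂ h ∧
      PowerSeries.coeff 0 h ≠ 0) :
    ∃ R : Matrix (Fin 2) (Fin 2) Khat,
      (∀ i j, MemOhat (R i j)) ∧
      (∃ S : Matrix (Fin 2) (Fin 2) Khat, (∀ i j, MemOhat (S i j)) ∧
        R * S = 1 ∧ S * R = 1) ∧
      (∀ i j, i ≠ j → lamGauge A R i j = 0) := by
  exact stmt7_aux A hA hdisc

end
end

section
/- Let r ∈ ℂ((z))[[λ]] be such that its constant λ-term r(z,0) lies in ℂ[[z]] and is a unit of ℂ[[z]]. If r⁻¹·(dr/dz) ∈ ℂ[[z,λ]], then r ∈ ℂ[[z,λ]] and r is a unit of ℂ[[z,λ]]. -/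
open PowerSeries

noncomputable section

lemma mem_Oz_iff (f : K) : f ∈ Oz ↔ ∀ n : ℤ, n < 0 → f.coeff n = 0 := by
  constructor
  · rintro ⟨g, rfl⟩ n hn
    rw [HahnSeries.ofPowerSeries_apply, HahnSeries.embDomain_notin_range]
    rintro ⟨m, hm⟩
    simp only [RelEmbedding.coe_mk, Function.Embedding.coeFn_mk, Nat.castOrderEmbedding_apply] at hm
    omega
  · intro h
    refine ⟨PowerSeries.mk fun n : ℕ => f.coeff n, ?_⟩
    ext n
    cases n with
    | ofNat m =>
        rw [Int.ofNat_eq_coe, HahnSeries.ofPowerSeries_apply_coeff]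
        simp
    | negSucc m =>
        rw [h _ (Int.negSucc_lt_zero m), HahnSeries.ofPowerSeries_apply,
          HahnSeries.embDomain_notin_range]
        rintro ⟨k, hk⟩
        simp only [RelEmbedding.coe_mk, Function.Embedding.coeFn_mk, Nat.castOrderEmbedding_apply, Int.negSucc_eq] at hk
        omega

lemma coeff_mul_eq_zero {f g : K} {N k : ℤ} (hf : ∀ m : ℤ, m < 0 → f.coeff m = 0)
    (hg : ∀ m : ℤ, m < N → g.coeff m = 0) (hk : k < N) : (f * g).coeff k = 0 := by
  rw [HahnSeries.coeff_mul]
  apply Finset.sum_eq_zero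
  rintro ⟨a, b⟩ hab
  rw [Finset.mem_addAntidiagonal] at hab
  obtain ⟨ha, hb, habk⟩ := hab
  exfalso
  have ha0 : 0 ≤ a := by by_contra h; exact ha (hf a (by omega))
  have hb0 : N ≤ b := by by_contra h; exact hb (hg b (by omega))
  omega

lemma mem_Oz_of_lD_s9 {f u w : K} (hu : ∀ m : ℤ, m < 0 → u.coeff m = 0)
    (hw : ∀ m : ℤ, m < 0 → w.coeff m = 0)
    (heq : lD f = u * f + w) : f ∈ Oz := by
  rw [mem_Oz_iff]
  by_contra h
  push_neg at h
  obtain ⟨m, hm, hne⟩ := h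
  have hf0 : f ≠ 0 := fun h => hne (by simp [h])
  set N := f.order with hN
  have hNm : N ≤ m := HahnSeries.order_le_of_coeff_ne_zero hne
  have hNneg : N < 0 := lt_of_le_of_lt hNm hm
  have h1 : (lD f).coeff (N - 1) = (N : ℂ) * f.coeff N := by
    show (((N - 1 : ℤ) : ℂ) + 1) * f.coeff (N - 1 + 1) = _
    rw [show N - 1 + 1 = N by ring]
    push_cast
    ring_nf
  have h2 : (lD f).coeff (N - 1) = 0 := by
    rw [heq, HahnSeries.coeff_add,
      coeff_mul_eq_zero hu (fun m hm => HahnSeries.coeff_eq_zero_of_lt_order hm) (by omega),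
      hw _ (by omega), add_zero]
  rw [h1] at h2
  rcases mul_eq_zero.mp h2 with h3 | h3
  · exact absurd (Int.cast_eq_zero.mp h3) (by omega)
  · exact hf0 (HahnSeries.coeff_order_eq_zero.mp h3)

/-- If `r ∈ ℂ((z))[[λ]]` has constant `λ`-term a unit of `ℂ[[z]]` and
`r⁻¹·(dr/dz) ∈ ℂ[[z,λ]]`, then `r ∈ ℂ[[z,λ]]` and `r` is a unit of `ℂ[[z,λ]]`. -/
theorem stmt9 (r : Khat)
    (hr0 : ∃ g : PowerSeries ℂ, ev0 r = HahnSeries.ofPowerSeries ℤ ℂ g ∧ IsUnit g)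
    (hdlog : MemOhat (r⁻¹ * pD r)) :
    MemOhat r ∧ ∃ s : Khat, MemOhat s ∧ r * s = 1 := by
  obtain ⟨g, hg, hgu⟩ := hr0
  set u : Khat := r⁻¹ * pD r with hu
  have hc0 : PowerSeries.constantCoeff r ≠ 0 := by
    show ev0 r ≠ 0
    rw [hg]
    intro h
    have := HahnSeries.ofPowerSeries_injective (Γ := ℤ) (R := ℂ)
      (by rw [h, map_zero] : HahnSeries.ofPowerSeries ℤ ℂ g = HahnSeries.ofPowerSeries ℤ ℂ 0)
    exact hgu.ne_zero this
  have hru : pD r = r * u := by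
    rw [hu, ← mul_assoc, PowerSeries.mul_inv_cancel r hc0, one_mul]
  -- membership
  have hmem : MemOhat r := by
    intro i
    induction i using Nat.strong_induction_on with
    | _ i ih =>
      have key : lD (PowerSeries.coeff i r)
          = (PowerSeries.coeff 0 u) * (PowerSeries.coeff i r)
            + ∑ p ∈ (Finset.HasAntidiagonal.antidiagonal i).erase (i, 0),
                PowerSeries.coeff p.1 r * PowerSeries.coeff p.2 u := by
        have h1 : PowerSeries.coeff i (pD r) = PowerSeries.coeff i (r * u) := by rw [hru]
        rw [PowerSeries.coeff_mul,
          ← Finset.add_sum_erase _ _ (by simp : ((i, 0) : ℕ × ℕ) ∈ Finset.HasAntidiagonal.antidiagonal i)] at h1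
        have h2 : PowerSeries.coeff i (pD r) = lD (PowerSeries.coeff i r) :=
          PowerSeries.coeff_mk _ _
        rw [h2, mul_comm (PowerSeries.coeff i r)] at h1
        exact h1
      have hwmem : (∑ p ∈ (Finset.HasAntidiagonal.antidiagonal i).erase (i, 0),
          PowerSeries.coeff p.1 r * PowerSeries.coeff p.2 u) ∈ Oz := by
        apply Subring.sum_mem
        rintro ⟨a, b⟩ hab
        have h3 := Finset.mem_of_mem_erase hab
        rw [Finset.HasAntidiagonal.mem_antidiagonal] at h3
        have h4 : (a, b) ≠ (i, 0) := Finset.ne_of_mem_erase hab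
        have ha : a < i := by
          rcases lt_or_eq_of_le (by omega : a ≤ i) with h | h
          · exact h
          · exact absurd (by simp [h]; omega : (a, b) = (i, 0)) h4
        exact Subring.mul_mem _ (ih a ha) (hdlog b)
      exact mem_Oz_of_lD_s9 ((mem_Oz_iff _).mp (hdlog 0)) ((mem_Oz_iff _).mp hwmem) key
  refine ⟨hmem, r⁻¹, ?_, PowerSeries.mul_inv_cancel r hc0⟩
  -- inverse membership
  obtain ⟨gu, hgu'⟩ := hgu
  have hgg : (gu : PowerSeries ℂ) * (gu⁻¹ : Units (PowerSeries ℂ)) = 1 := gu.mul_inv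
  have hinv : HahnSeries.ofPowerSeries ℤ ℂ ((gu⁻¹ : Units (PowerSeries ℂ)) : PowerSeries ℂ)
      * PowerSeries.constantCoeff r = 1 := by
    show _ * ev0 r = 1
    rw [hg, ← map_mul, ← hgu', mul_comm ((gu⁻¹ : Units (PowerSeries ℂ)) : PowerSeries ℂ), hgg,
      map_one]
  set q : K := HahnSeries.ofPowerSeries ℤ ℂ ((gu⁻¹ : Units (PowerSeries ℂ)) : PowerSeries ℂ)
    with hq
  have hqmem : q ∈ Oz := ⟨_, rfl⟩
  have hrr : r * r⁻¹ = 1 := PowerSeries.mul_inv_cancel r hc0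
  intro i
  induction i using Nat.strong_induction_on with
  | _ i ih =>
    have h1 : PowerSeries.coeff i (r * r⁻¹) = PowerSeries.coeff i 1 := by rw [hrr]
    rw [PowerSeries.coeff_mul,
      ← Finset.add_sum_erase _ _ (by simp : ((0, i) : ℕ × ℕ) ∈ Finset.HasAntidiagonal.antidiagonal i)] at h1
    have h2 : PowerSeries.coeff i r⁻¹
        = q * (PowerSeries.coeff i 1 - ∑ p ∈ (Finset.HasAntidiagonal.antidiagonal i).erase (0, i),
            PowerSeries.coeff p.1 r * PowerSeries.coeff p.2 r⁻¹) := by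
      have := congrArg (q * ·) (eq_sub_of_add_eq h1)
      simpa [← mul_assoc, hinv] using this
    rw [h2]
    apply Subring.mul_mem _ hqmem
    apply Subring.sub_mem
    · rw [PowerSeries.coeff_one]
      split_ifs
      · exact Subring.one_mem _
      · exact Subring.zero_mem _
    · apply Subring.sum_mem
      rintro ⟨a, b⟩ hab
      have h3 := Finset.mem_of_mem_erase hab
      rw [Finset.HasAntidiagonal.mem_antidiagonal] at h3
      have h4 : (a, b) ≠ (0, i) := Finset.ne_of_mem_erase hab
      have hb : b < i := by
        rcases lt_or_eq_of_le (by omega : b ≤ i) with h | h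
        · exact h
        · exact absurd (by simp [h]; omega : (a, b) = (0, i)) h4
      exact Subring.mul_mem _ (hmem a) (ih b hb)


end
end

section
/- Let A = Σᵢ Aᵢ(z)λⁱ ∈ M₂(ℂ((z))[[λ]]) be such that every coefficient Aᵢ is a diagonal matrix, and let R ∈ M₂(ℂ((z))[[λ]]) be invertible over ℂ((z))[[λ]] with R(z,0) ∈ M₂(ℂ[[z]]) and det R(z,0) ∈ ℂ[[z]] having a simple zero at z = 0. If Gauge_λ(A,R) = R⁻¹AR + λR⁻¹(dR/dz) ∈ M₂(ℂ[[z,λ]]), then res_{z=0} tr A = −λ; that is, the λ⁰-coefficient of tr A has residue 0, the λ¹-coefficient has residue −1, and all higher λ-coefficients have residue 0. -/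
open PowerSeries

noncomputable section

namespace Aux
open HahnSeries LaurentSeries

lemma lD_coeff (f : K) (n : ℤ) : (lD f).coeff n = ((n : ℂ) + 1) * f.coeff (n + 1) := rfl

lemma lD_add (f g : K) : lD (f + g) = lD f + lD g := by
  ext n
  simp only [lD_coeff, HahnSeries.coeff_add]
  ring

lemma lD_sum {α : Type*} (s : Finset α) (f : α → K) :
    lD (∑ x ∈ s, f x) = ∑ x ∈ s, lD (f x) :=
  map_sum (AddMonoidHom.mk' lD lD_add) f s

lemma single_mul_coeff (m : ℤ) (c : ℂ) (x : K) (n : ℤ) :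
    ((single m c : K) * x).coeff n = c * x.coeff (n - m) := by
  have := HahnSeries.coeff_single_mul_add (r := c) (x := x) (a := n - m) (b := m)
  simpa using this

lemma lD_single_mul (m : ℤ) (c : ℂ) (x : K) :
    lD ((single m c : K) * x)
      = (single (m - 1) ((m : ℂ) * c) : K) * x + (single m c : K) * lD x := by
  ext n
  rw [HahnSeries.coeff_add, lD_coeff, single_mul_coeff, single_mul_coeff, single_mul_coeff,
    lD_coeff]
  have e1 : n - (m - 1) = n + 1 - m := by ring
  have e2 : n - m + 1 = n + 1 - m := by ring
  rw [e1, e2]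
  push_cast
  ring

lemma lD_single (m : ℤ) (c : ℂ) : lD (single m c : K) = single (m - 1) ((m : ℂ) * c) := by
  ext n
  rw [lD_coeff, HahnSeries.coeff_single, HahnSeries.coeff_single]
  split_ifs with h1 h2 h2
  · have : m = n + 1 := by omega
    subst this
    push_cast
    ring
  · omega
  · omega
  · ring

lemma lD_one : lD (1 : K) = 0 := by
  rw [← HahnSeries.single_zero_one, lD_single]
  norm_num

lemma lD_C (c : ℂ) : lD (HahnSeries.C c : K) = 0 := by
  rw [HahnSeries.C_apply, lD_single]
  norm_num

lemma lD_ofPS (F : PowerSeries ℂ) :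
    lD ((HahnSeries.ofPowerSeries ℤ ℂ) F) = (HahnSeries.ofPowerSeries ℤ ℂ) F.derivativeFun := by
  ext n
  rw [lD_coeff, PowerSeries.coeff_coe, PowerSeries.coeff_coe]
  rcases lt_trichotomy n (-1) with h | h | h
  · rw [if_pos (by omega), if_pos (by omega), mul_zero]
  · subst h
    rw [if_neg (show ¬((-1:ℤ)+1 < 0) by norm_num), if_pos (show (-1:ℤ) < 0 by norm_num)]
    norm_num
  · have h0 : ¬ n < 0 := by omega
    have h1 : ¬ n + 1 < 0 := by omega
    rw [if_neg h0, if_neg h1]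
    show _ = PowerSeries.coeff n.natAbs (PowerSeries.derivative ℂ F)
    rw [PowerSeries.coeff_derivative]
    have hn : (n + 1).natAbs = n.natAbs + 1 := by omega
    rw [hn]
    have : ((n.natAbs : ℂ) + 1) = (n : ℂ) + 1 := by
      have h2 : (n.natAbs : ℤ) = n := Int.natAbs_of_nonneg (by omega)
      have h3 : ((n.natAbs : ℤ) : ℂ) = (n : ℂ) := by rw [h2]
      rw [Int.cast_natCast] at h3
      rw [h3]
    rw [this]
    ring

end Aux

namespace Aux
open HahnSeries LaurentSeries

lemma single_add' (m : ℤ) (c d : ℂ) :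
    (single m (c + d) : K) = single m c + single m d := by
  ext n
  rw [HahnSeries.coeff_add, HahnSeries.coeff_single, HahnSeries.coeff_single,
    HahnSeries.coeff_single]
  split_ifs <;> simp

lemma mul_rearrange (m n : ℤ) (c d : ℂ) (x y : K) :
    (single m c * x) * (single n d * y) = single (m + n) (c * d) * (x * y) := by
  rw [mul_mul_mul_comm, HahnSeries.single_mul_single]

lemma lD_mul_aux (a b : ℤ) (F G : PowerSeries ℂ) :
    lD ((single a 1 * (HahnSeries.ofPowerSeries ℤ ℂ) F) *
        (single b 1 * (HahnSeries.ofPowerSeries ℤ ℂ) G))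
      = lD (single a 1 * (HahnSeries.ofPowerSeries ℤ ℂ) F) *
          (single b 1 * (HahnSeries.ofPowerSeries ℤ ℂ) G)
        + (single a 1 * (HahnSeries.ofPowerSeries ℤ ℂ) F) *
          lD (single b 1 * (HahnSeries.ofPowerSeries ℤ ℂ) G) := by
  rw [mul_rearrange, mul_one, ← (HahnSeries.ofPowerSeries ℤ ℂ).map_mul F G,
    lD_single_mul, lD_single_mul, lD_single_mul, lD_ofPS, lD_ofPS, lD_ofPS,
    PowerSeries.derivativeFun_mul, smul_eq_mul, smul_eq_mul,
    (HahnSeries.ofPowerSeries ℤ ℂ).map_add, (HahnSeries.ofPowerSeries ℤ ℂ).map_mul,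
    (HahnSeries.ofPowerSeries ℤ ℂ).map_mul, (HahnSeries.ofPowerSeries ℤ ℂ).map_mul]
  simp only [add_mul, mul_add, mul_rearrange]
  have e1 : a - 1 + b = a + b - 1 := by ring
  have e2 : a + (b - 1) = a + b - 1 := by ring
  have e3 : ((a + b : ℤ) : ℂ) * 1 = (a : ℂ) * 1 * 1 + 1 * ((b : ℂ) * 1) := by
    push_cast; ring
  rw [e1, e2, e3, single_add']
  ring

lemma lD_mul (f g : K) : lD (f * g) = lD f * g + f * lD g := by
  conv_lhs => rw [← f.single_order_mul_powerSeriesPart, ← g.single_order_mul_powerSeriesPart]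
  conv_rhs => rw [← f.single_order_mul_powerSeriesPart, ← g.single_order_mul_powerSeriesPart]
  exact lD_mul_aux _ _ _ _

end Aux

namespace Aux
open HahnSeries LaurentSeries

lemma lD_zero : lD (0 : K) = 0 := by
  ext n
  rw [lD_coeff]
  simp

lemma pD_coeff (F : Khat) (i : ℕ) :
    PowerSeries.coeff i (pD F) = lD (PowerSeries.coeff i F) := by
  simp [pD]

lemma pD_add (F G : Khat) : pD (F + G) = pD F + pD G := by
  ext i
  rw [map_add, pD_coeff, pD_coeff, pD_coeff, map_add, lD_add]

lemma pD_mul (F G : Khat) : pD (F * G) = pD F * G + F * pD G := by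
  ext i
  have step :
      ∑ p ∈ Finset.HasAntidiagonal.antidiagonal i, lD (PowerSeries.coeff p.1 F * PowerSeries.coeff p.2 G)
        = ∑ p ∈ Finset.HasAntidiagonal.antidiagonal i,
            (PowerSeries.coeff p.1 (pD F) * PowerSeries.coeff p.2 G
              + PowerSeries.coeff p.1 F * PowerSeries.coeff p.2 (pD G)) :=
    Finset.sum_congr rfl fun p _ => by rw [lD_mul, ← pD_coeff F p.1, ← pD_coeff G p.2]
  rw [map_add, pD_coeff, PowerSeries.coeff_mul, PowerSeries.coeff_mul, PowerSeries.coeff_mul,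
    lD_sum (Finset.HasAntidiagonal.antidiagonal i)
      (fun p => PowerSeries.coeff p.1 F * PowerSeries.coeff p.2 G),
    step, Finset.sum_add_distrib]

lemma pD_one : pD (1 : Khat) = 0 := by
  ext i
  rw [pD_coeff, PowerSeries.coeff_one]
  split_ifs with h
  · rw [lD_one]
    simp [h]
  · rw [lD_zero]
    simp

lemma pD_sum {α : Type*} (s : Finset α) (f : α → Khat) :
    pD (∑ x ∈ s, f x) = ∑ x ∈ s, pD (f x) :=
  map_sum (AddMonoidHom.mk' pD pD_add) f s

lemma pD_C (x : K) : pD (PowerSeries.C x) = PowerSeries.C (lD x) := by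
  ext i
  rw [pD_coeff, PowerSeries.coeff_C, PowerSeries.coeff_C]
  split_ifs <;> simp [lD_zero]

lemma pD_X : pD (PowerSeries.X : Khat) = 0 := by
  ext i
  rw [pD_coeff, PowerSeries.coeff_X]
  split_ifs <;> simp [lD_one, lD_zero]

lemma pD_X_pow (k : ℕ) : pD ((PowerSeries.X : Khat) ^ k) = 0 := by
  induction k with
  | zero => simpa using pD_one
  | succ k ih =>
    rw [pow_succ, pD_mul, ih, pD_X]
    simp

lemma dvd_pD {k : ℕ} {F : Khat} (h : (PowerSeries.X : Khat) ^ k ∣ F) :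
    (PowerSeries.X : Khat) ^ k ∣ pD F := by
  obtain ⟨G, rfl⟩ := h
  rw [pD_mul, pD_X_pow]
  exact ⟨pD G, by ring⟩

/-- constants `ℂ → Khat` -/
def γ : ℂ →+* Khat := (PowerSeries.C (R := K)).comp (HahnSeries.C)

lemma pD_γ (c : ℂ) : pD (γ c) = 0 := by
  show pD (PowerSeries.C (HahnSeries.C c)) = 0
  rw [pD_C, lD_C, map_zero]

-- residue lemmas
lemma res_add (f g : K) : res (f + g) = res f + res g := rfl

lemma res_zero : res (0 : K) = 0 := rfl

lemma res_lD (f : K) : res (lD f) = 0 := by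
  show ((((-1 : ℤ) : ℂ)) + 1) * f.coeff (-1 + 1) = 0
  norm_num

lemma res_ofPS (F : PowerSeries ℂ) : res ((HahnSeries.ofPowerSeries ℤ ℂ) F) = 0 := by
  show ((HahnSeries.ofPowerSeries ℤ ℂ) F).coeff (-1) = 0
  rw [PowerSeries.coeff_coe, if_pos (by norm_num)]

lemma res_mem_Oz {f : K} (h : f ∈ Oz) : res f = 0 := by
  obtain ⟨F, rfl⟩ := h
  exact res_ofPS F

lemma resHat_coeff (F : Khat) (i : ℕ) :
    PowerSeries.coeff i (resHat F) = res (PowerSeries.coeff i F) := by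
  simp [resHat]

lemma resHat_add (F G : Khat) : resHat (F + G) = resHat F + resHat G := by
  ext i
  rw [map_add, resHat_coeff, resHat_coeff, resHat_coeff, map_add, res_add]

lemma resHat_pD (F : Khat) : resHat (pD F) = 0 := by
  ext i
  rw [resHat_coeff, pD_coeff, res_lD, map_zero]

lemma resHat_of_memOhat {F : Khat} (h : MemOhat F) : resHat F = 0 := by
  ext i
  rw [resHat_coeff, res_mem_Oz (h i), map_zero]

lemma resHat_C (x : K) : resHat (PowerSeries.C x) = PowerSeries.C (res x) := by
  ext i
  rw [resHat_coeff, PowerSeries.coeff_C, PowerSeries.coeff_C]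
  split_ifs <;> simp [res_zero]

lemma resHat_X_mul (F : Khat) :
    resHat ((PowerSeries.X : Khat) * F) = PowerSeries.X * resHat F := by
  ext i
  cases i with
  | zero =>
    rw [resHat_coeff, PowerSeries.coeff_zero_X_mul, PowerSeries.coeff_zero_X_mul, res_zero]
  | succ n =>
    rw [resHat_coeff, PowerSeries.coeff_succ_X_mul, PowerSeries.coeff_succ_X_mul, resHat_coeff]

end Aux

namespace Aux
open HahnSeries LaurentSeries

lemma coeff_eq_zero_of_X_pow_dvd {k : ℕ} {F : Khat} (h : (PowerSeries.X : Khat) ^ k ∣ F)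
    {a : ℕ} (ha : a < k) : PowerSeries.coeff a F = 0 :=
  PowerSeries.X_pow_dvd_iff.mp h a ha

/-- partial sums of the formal logarithm of `1 + u` -/
def Slog (u : Khat) (m : ℕ) : Khat :=
  ∑ n ∈ Finset.range m, γ ((-1) ^ n / ((n : ℂ) + 1)) * u ^ (n + 1)

lemma Slog_zero (u : Khat) : Slog u 0 = 0 := Finset.sum_range_zero _

lemma Slog_succ (u : Khat) (m : ℕ) :
    Slog u (m + 1) = Slog u m + γ ((-1) ^ m / ((m : ℂ) + 1)) * u ^ (m + 1) :=
  Finset.sum_range_succ _ _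

lemma pD_zero : pD (0 : Khat) = 0 := by
  ext i
  simp [pD_coeff, lD_zero]

lemma pD_pow (u : Khat) (n : ℕ) : pD (u ^ (n + 1)) = γ ((n : ℂ) + 1) * (u ^ n * pD u) := by
  induction n with
  | zero =>
    have : γ ((0 : ℂ) + 1) = 1 := by rw [zero_add, map_one]
    simpa [pow_one, pow_zero, one_mul] using this ▸ rfl
  | succ n ih =>
    have hcast : γ (((n + 1 : ℕ) : ℂ) + 1) = γ ((n : ℂ) + 1) + 1 := by
      push_cast
      rw [map_add, map_one]
    rw [pow_succ, pD_mul, ih, hcast]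
    ring

lemma Slog_key (u : Khat) (m : ℕ) :
    pD (Slog u m) * (1 + u) = pD u - γ ((-1) ^ m) * (u ^ m * pD u) := by
  induction m with
  | zero =>
    rw [Slog_zero, pD_zero, zero_mul, pow_zero, map_one, pow_zero]
    ring
  | succ m ih =>
    have hne : ((m : ℂ) + 1) ≠ 0 := by
      have h1 : (((m + 1 : ℕ)) : ℂ) ≠ 0 := Nat.cast_ne_zero.mpr (Nat.succ_ne_zero m)
      push_cast at h1
      exact h1
    have hγ : γ ((-1 : ℂ) ^ m / ((m : ℂ) + 1)) * γ ((m : ℂ) + 1) = γ ((-1 : ℂ) ^ m) := by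
      rw [← map_mul, div_mul_cancel₀ _ hne]
    have hneg : γ ((-1 : ℂ) ^ (m + 1)) = - γ ((-1 : ℂ) ^ m) := by
      rw [pow_succ, mul_neg_one, map_neg]
    rw [Slog_succ, pD_add, add_mul, ih, pD_mul, pD_γ, pD_pow, hneg, zero_mul, zero_add]
    rw [show γ ((-1 : ℂ) ^ m / ((m : ℂ) + 1)) * (γ ((m : ℂ) + 1) * (u ^ m * pD u))
        = (γ ((-1 : ℂ) ^ m / ((m : ℂ) + 1)) * γ ((m : ℂ) + 1)) * (u ^ m * pD u) from by ring,
      hγ]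
    ring

lemma X_pow_dvd_Slog_sub (u : Khat) (hu : (PowerSeries.X : Khat) ∣ u) {m m' : ℕ}
    (h : m ≤ m') : (PowerSeries.X : Khat) ^ (m + 1) ∣ Slog u m' - Slog u m := by
  rw [show Slog u m' - Slog u m
      = ∑ n ∈ Finset.Ico m m', γ ((-1) ^ n / ((n : ℂ) + 1)) * u ^ (n + 1) from
    (Finset.sum_Ico_eq_sub _ h).symm]
  apply Finset.dvd_sum
  intro n hn
  have hmn : m ≤ n := (Finset.mem_Ico.mp hn).1
  have h1 : (PowerSeries.X : Khat) ^ (m + 1) ∣ (PowerSeries.X : Khat) ^ (n + 1) :=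
    pow_dvd_pow _ (by omega)
  exact Dvd.dvd.mul_left (h1.trans (pow_dvd_pow_of_dvd hu (n + 1))) _

lemma resHat_logderiv (u w : Khat) (hu : PowerSeries.constantCoeff u = 0)
    (hw : (1 + u) * w = 1) : resHat (pD (1 + u) * w) = 0 := by
  have hXu : (PowerSeries.X : Khat) ∣ u := PowerSeries.X_dvd_iff.mpr hu
  set L : Khat := PowerSeries.mk fun i => PowerSeries.coeff i (Slog u (i + 1)) with hL
  have hLcoeff : ∀ (a m : ℕ), a < m →
      PowerSeries.coeff a L = PowerSeries.coeff a (Slog u m) := by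
    intro a m ham
    rw [hL, PowerSeries.coeff_mk]
    rcases le_total (a + 1) m with h | h
    · have hdvd := X_pow_dvd_Slog_sub u hXu h
      have h0 : PowerSeries.coeff a (Slog u m - Slog u (a + 1)) = 0 :=
        coeff_eq_zero_of_X_pow_dvd hdvd (by omega)
      rw [map_sub] at h0
      exact (sub_eq_zero.mp h0).symm
    · have : m = a + 1 := by omega
      rw [this]
  have hkey : pD L * (1 + u) = pD u := by
    ext i
    have h1 : PowerSeries.coeff i (pD L * (1 + u))
        = PowerSeries.coeff i (pD (Slog u (i + 1)) * (1 + u)) := by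
      rw [PowerSeries.coeff_mul, PowerSeries.coeff_mul]
      refine Finset.sum_congr rfl fun p hp => ?_
      have hp1 : p.1 ≤ i := by
        have := Finset.HasAntidiagonal.mem_antidiagonal.mp hp
        omega
      rw [pD_coeff, pD_coeff, hLcoeff p.1 (i + 1) (by omega)]
    rw [h1, Slog_key, map_sub]
    have h2 : PowerSeries.coeff i (γ ((-1 : ℂ) ^ (i + 1)) * (u ^ (i + 1) * pD u)) = 0 := by
      apply coeff_eq_zero_of_X_pow_dvd (k := i + 1) _ (by omega)
      exact Dvd.dvd.mul_left (Dvd.dvd.mul_right (pow_dvd_pow_of_dvd hXu (i + 1)) _) _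
    rw [h2, sub_zero]
  have hpd1u : pD (1 + u) = pD u := by rw [pD_add, pD_one, zero_add]
  have hfin : pD (1 + u) * w = pD L := by
    calc pD (1 + u) * w = (pD L * (1 + u)) * w := by rw [hpd1u, hkey]
    _ = pD L * ((1 + u) * w) := by ring
    _ = pD L := by rw [hw, mul_one]
  rw [hfin, resHat_pD]

end Aux

namespace Aux
open HahnSeries LaurentSeries

lemma lD_neg (f : K) : lD (-f) = - lD f := by
  ext n
  rw [HahnSeries.coeff_neg, lD_coeff, lD_coeff, HahnSeries.coeff_neg]
  ring

lemma pD_sub (F G : Khat) : pD (F - G) = pD F - pD G := by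
  ext i
  rw [map_sub, pD_coeff, pD_coeff, pD_coeff, map_sub]
  rw [sub_eq_add_neg, sub_eq_add_neg, ← lD_neg, ← lD_add]

lemma res_single_neg_one : res (single (-1 : ℤ) (1 : ℂ) : K) = 1 := by
  show (single (-1 : ℤ) (1 : ℂ) : K).coeff (-1) = 1
  exact HahnSeries.coeff_single_same _ _

lemma resHat_logderiv_unit (d e : Khat) (hde : d * e = 1)
    (h : PowerSeries ℂ) (h0 : ev0 d = (HahnSeries.ofPowerSeries ℤ ℂ) h) (hs : SimpleZero h) :
    resHat (pD d * e) = 1 := by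
  obtain ⟨hc0, hc1⟩ := hs
  obtain ⟨g, rfl⟩ : (PowerSeries.X : PowerSeries ℂ) ∣ h := by
    rw [PowerSeries.X_dvd_iff, ← PowerSeries.coeff_zero_eq_constantCoeff_apply]
    exact hc0
  have hg0 : PowerSeries.constantCoeff g ≠ 0 := by
    rw [← PowerSeries.coeff_zero_eq_constantCoeff_apply]
    rwa [show (1 : ℕ) = 0 + 1 from rfl, PowerSeries.coeff_succ_X_mul] at hc1
  set kk : K := (HahnSeries.ofPowerSeries ℤ ℂ) (PowerSeries.X * g) with hkk
  set jj : K := single (-1 : ℤ) (1 : ℂ) * (HahnSeries.ofPowerSeries ℤ ℂ) g⁻¹ with hjj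
  have hmul : kk * jj = 1 := by
    rw [hkk, hjj, map_mul, HahnSeries.ofPowerSeries_X, mul_rearrange,
      show (1 : ℤ) + (-1) = 0 from by norm_num, show (1 : ℂ) * 1 = 1 from by norm_num,
      ← map_mul, PowerSeries.mul_inv_cancel g hg0,
      (HahnSeries.ofPowerSeries ℤ ℂ).map_one, mul_one, HahnSeries.single_zero_one]
  have hres : res (lD kk * jj) = 1 := by
    rw [hkk, map_mul, HahnSeries.ofPowerSeries_X, lD_single_mul, lD_ofPS, hjj, add_mul,
      mul_rearrange, mul_rearrange, ← map_mul, ← map_mul,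
      PowerSeries.mul_inv_cancel g hg0, map_one, mul_one,
      show (1 : ℤ) - 1 + -1 = -1 from by norm_num, show (1 : ℤ) + -1 = 0 from by norm_num,
      show ((1 : ℤ) : ℂ) * 1 * 1 = 1 from by norm_num,
      show ((1 : ℂ)) * 1 = 1 from by norm_num,
      res_add, res_single_neg_one, HahnSeries.single_zero_one, one_mul, res_ofPS, add_zero]
  set v : Khat := PowerSeries.C jj * d with hv
  set w : Khat := PowerSeries.C kk * e with hw2
  have hjk : jj * kk = 1 := by rw [mul_comm]; exact hmul
  have hd : PowerSeries.C kk * v = d := by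
    rw [hv, ← mul_assoc, ← map_mul, hmul, map_one, one_mul]
  have hvw : v * w = 1 := by
    rw [hv, hw2, mul_mul_mul_comm, ← map_mul, hjk, map_one, one_mul, hde]
  have hv0 : PowerSeries.constantCoeff v = 1 := by
    rw [hv, map_mul, PowerSeries.constantCoeff_C]
    have hced : PowerSeries.constantCoeff d = kk := h0
    rw [hced, hjk]
  set u : Khat := v - 1 with hu
  have hucc : PowerSeries.constantCoeff u = 0 := by
    rw [hu, map_sub, hv0, map_one, sub_self]
  have h1u : 1 + u = v := by rw [hu]; ring
  have hlog : resHat (pD v * w) = 0 := by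
    rw [← h1u]
    exact resHat_logderiv u w hucc (by rw [h1u]; exact hvw)
  have hve : v * e = PowerSeries.C jj := by rw [hv, mul_assoc, hde, mul_one]
  have hdecomp : pD d * e = PowerSeries.C (lD kk * jj) + pD v * w := by
    conv_lhs => rw [← hd]
    rw [pD_mul, pD_C, add_mul,
      show PowerSeries.C (lD kk) * v * e = PowerSeries.C (lD kk) * (v * e) from by ring,
      hve, ← map_mul,
      show PowerSeries.C kk * pD v * e = pD v * (PowerSeries.C kk * e) from by ring, ← hw2]
  rw [hdecomp, resHat_add, resHat_C, hres, hlog, add_zero, map_one]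

lemma jacobi (R : Matrix (Fin 2) (Fin 2) Khat) :
    (R.adjugate * R.map pD).trace = pD R.det := by
  rw [Matrix.det_fin_two, pD_sub, pD_mul, pD_mul, Matrix.trace_fin_two,
    Matrix.adjugate_fin_two]
  simp [Matrix.mul_apply, Fin.sum_univ_two, Matrix.map_apply]
  ring

end Aux


open Aux

set_option maxHeartbeats 2000000

/-- Suppose `A ∈ M₂(ℂ((z))[[λ]])` is diagonal and `R ∈ M₂(ℂ((z))[[λ]])`
is invertible with `R(z,0) ∈ M₂(ℂ[[z]])` and `det R(z,0)` having a simple zero at `z = 0`.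
If `Gauge_λ(A,R) ∈ M₂(ℂ[[z,λ]])`, then `res tr A = -λ`. -/
theorem stmt15 (A : Matrix (Fin 2) (Fin 2) Khat)
    (hdiag : ∀ i j, i ≠ j → A i j = 0)
    (R : Matrix (Fin 2) (Fin 2) Khat) (hR : IsUnit R)
    (hR0 : ∀ i j, (R.map ev0) i j ∈ Oz)
    (hdet : ∃ h : PowerSeries ℂ, (R.map ev0).det = HahnSeries.ofPowerSeries ℤ ℂ h ∧
      SimpleZero h)
    (hgauge : ∀ i j, MemOhat (lamGauge A R i j)) :
    resHat A.trace = -PowerSeries.X := by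
  have hdet' : IsUnit R.det := (Matrix.isUnit_iff_isUnit_det R).mp hR
  have hRinv : R * R⁻¹ = 1 := Matrix.mul_nonsing_inv R hdet'
  have hde : R.det * Ring.inverse R.det = 1 := Ring.mul_inverse_cancel R.det hdet'
  have htr : (lamGauge A R).trace
      = A.trace + PowerSeries.X * (Ring.inverse R.det * pD R.det) := by
    rw [lamGauge, Matrix.trace_add,
      Matrix.trace_smul (PowerSeries.X : Khat) (R⁻¹ * R.map pD)]
    congr 1
    · rw [Matrix.trace_mul_comm (R⁻¹ * A) R, ← Matrix.mul_assoc, hRinv, Matrix.one_mul]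
    · rw [Matrix.inv_def, Matrix.smul_mul (Ring.inverse R.det) R.adjugate (R.map pD),
        Matrix.trace_smul (Ring.inverse R.det) (R.adjugate * R.map pD), jacobi, smul_eq_mul,
        smul_eq_mul]
  have h0 : resHat (lamGauge A R).trace = 0 := by
    rw [Matrix.trace_fin_two, resHat_add, resHat_of_memOhat (hgauge 0 0),
      resHat_of_memOhat (hgauge 1 1), add_zero]
  have hulog : resHat (Ring.inverse R.det * pD R.det) = 1 := by
    obtain ⟨h, hh, hs⟩ := hdet
    have h0d : ev0 R.det = (HahnSeries.ofPowerSeries ℤ ℂ) h := by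
      rw [RingHom.map_det ev0 R, RingHom.mapMatrix_apply, hh]
    rw [mul_comm]
    exact resHat_logderiv_unit R.det (Ring.inverse R.det) hde h h0d hs
  have hfin := congrArg resHat htr
  rw [h0, resHat_add, resHat_X_mul, hulog, mul_one] at hfin
  exact eq_neg_of_add_eq_zero_left hfin.symm

end
end
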